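/- arXiv:math/0605053 — 11 statements merged into one kernel-verified Lean document; each statement's English description precedes it below -/
import Mathlib

section
/- There exists a constant K > 0 such that ⟨x − y, V(x) − V(y)⟩ ≤ K ‖x − y‖² for all x, y ∈ ℝ^d. -/
open scoped RealInnerProductSpace

/-- Lemma 2.2(a): under the dissipativity-at-infinity assumption on `DV`, the vector field
`V` satisfies a one-sided Lipschitz (monotonicity) bound globally. -/
theorem lemma_2_2_a (d : ℕ) (hd : 1 ≤ d)
    (V : EuclideanSpace ℝ (Fin d) → EuclideanSpace ℝ (Fin d))
    (hV : ContDiff ℝ 1 V)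
    (K_V R₀ : ℝ) (hKV : 0 < K_V) (hR₀ : 0 < R₀)
    (hdiss : ∀ (h x : EuclideanSpace ℝ (Fin d)), ‖h‖ = 1 → R₀ ≤ ‖x‖ →
      ⟪h, fderiv ℝ V x h⟫ ≤ -K_V) :
    ∃ K : ℝ, 0 < K ∧ ∀ x y : EuclideanSpace ℝ (Fin d),
      ⟪x - y, V x - V y⟫ ≤ K * ‖x - y‖ ^ 2 := by
  have hc : Continuous fun z : EuclideanSpace ℝ (Fin d) => ‖fderiv ℝ V z‖ :=
    (hV.continuous_fderiv one_ne_zero).norm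
  obtain ⟨x₀, hx₀, hM⟩ :=
    (isCompact_closedBall (0 : EuclideanSpace ℝ (Fin d)) R₀).exists_isMaxOn
      ⟨0, by simp [hR₀.le]⟩ hc.continuousOn
  set M := ‖fderiv ℝ V x₀‖ with hMdef
  set K := max M 1 with hKdef
  have hK0 : (0 : ℝ) < K := lt_of_lt_of_le one_pos (le_max_right _ _)
  refine ⟨K, hK0, ?_⟩
  have key : ∀ z h : EuclideanSpace ℝ (Fin d), ⟪h, fderiv ℝ V z h⟫ ≤ K * ‖h‖ ^ 2 := by
    intro z h
    rcases lt_or_ge ‖z‖ R₀ with hz | hz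
    · have hMz : ‖fderiv ℝ V z‖ ≤ M :=
        hM (by simpa [Metric.mem_closedBall, dist_zero_right] using hz.le)
      have h1 : ⟪h, fderiv ℝ V z h⟫ ≤ ‖h‖ * ‖fderiv ℝ V z h‖ := real_inner_le_norm _ _
      have h2 : ‖fderiv ℝ V z h‖ ≤ ‖fderiv ℝ V z‖ * ‖h‖ := (fderiv ℝ V z).le_opNorm h
      have hMK : M ≤ K := le_max_left _ _
      nlinarith [norm_nonneg h, norm_nonneg (fderiv ℝ V z)]
    · rcases eq_or_ne h 0 with rfl | hh
      · simp [inner_zero_left]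
      · have hn : 0 < ‖h‖ := norm_pos_iff.mpr hh
        have hu : ‖(‖h‖⁻¹ • h : EuclideanSpace ℝ (Fin d))‖ = 1 := by
          simp [norm_smul, abs_of_pos (inv_pos.mpr hn), inv_mul_cancel₀ hn.ne']
        have hd2 := hdiss (‖h‖⁻¹ • h) z hu hz
        have hlin : fderiv ℝ V z (‖h‖⁻¹ • h) = ‖h‖⁻¹ • fderiv ℝ V z h := by
          simp
        rw [hlin, real_inner_smul_left, real_inner_smul_right] at hd2
        have ha : ⟪h, fderiv ℝ V z h⟫ =
            (‖h‖ * ‖h‖) * (‖h‖⁻¹ * (‖h‖⁻¹ * ⟪h, fderiv ℝ V z h⟫)) := by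
          field_simp
        have hb := mul_le_mul_of_nonneg_left hd2 (mul_pos hn hn).le
        nlinarith [mul_nonneg hK0.le (sq_nonneg ‖h‖),
          mul_nonneg hKV.le (mul_pos hn hn).le]
  intro x y
  set v := x - y with hv
  have hdiff := hV.differentiable one_ne_zero
  have hderiv : ∀ t : ℝ,
      HasDerivAt (fun t : ℝ => ⟪v, V (y + t • v)⟫) ⟪v, fderiv ℝ V (y + t • v) v⟫ t := by
    intro t
    have h1 : HasDerivAt (fun t : ℝ => y + t • v) v t := by
      simpa using ((hasDerivAt_id t).smul_const v).const_add y
    have h2 := ((hdiff (y + t • v)).hasFDerivAt).comp_hasDerivAt t h1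
    have h3 := (hasDerivAt_const t v).inner ℝ h2
    simpa using h3
  have hmono : ∀ t : ℝ,
      HasDerivAt (fun t : ℝ => K * ‖v‖ ^ 2 * t - ⟪v, V (y + t • v)⟫)
        (K * ‖v‖ ^ 2 - ⟪v, fderiv ℝ V (y + t • v) v⟫) t := by
    intro t
    have h := ((hasDerivAt_id' t).const_mul (K * ‖v‖ ^ 2)).sub (hderiv t)
    rw [mul_one] at h
    exact h
  have hφ : (fun t : ℝ => K * ‖v‖ ^ 2 * t - ⟪v, V (y + t • v)⟫) 0 ≤
      (fun t : ℝ => K * ‖v‖ ^ 2 * t - ⟪v, V (y + t • v)⟫) 1 := by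
    have : Monotone fun t : ℝ => K * ‖v‖ ^ 2 * t - ⟪v, V (y + t • v)⟫ := by
      apply monotone_of_deriv_nonneg
      · exact fun t => (hmono t).differentiableAt
      · intro t
        rw [(hmono t).deriv]
        have := key (y + t • v) v
        linarith
    exact this zero_le_one
  have hyv : y + v = x := by rw [hv]; abel
  simp only [one_smul, zero_smul, add_zero, mul_one, mul_zero, zero_sub, hyv] at hφ
  rw [inner_sub_right]
  linarith
end

section
/- There exist constants η > 0 and R_1 > 0 such that for all x, y ∈ ℝ^d with ‖x − y‖ ≥ R_1 one has ⟨x − y, V(x) − V(y)⟩ ≤ −η ‖x − y‖². -/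
open scoped RealInnerProductSpace
open MeasureTheory Set

set_option maxHeartbeats 1000000 in
/-- Lemma 2.2(b): dissipativity of `V` for pairs of points at large distance. -/
theorem lemma_2_2_b (d : ℕ) (hd : 1 ≤ d)
    (V : EuclideanSpace ℝ (Fin d) → EuclideanSpace ℝ (Fin d))
    (hV : ContDiff ℝ 1 V)
    (K_V R₀ : ℝ) (hKV : 0 < K_V) (hR₀ : 0 < R₀)
    (hdiss : ∀ (h x : EuclideanSpace ℝ (Fin d)), ‖h‖ = 1 → R₀ ≤ ‖x‖ →
      ⟪h, fderiv ℝ V x h⟫ ≤ -K_V) :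
    ∃ η R₁ : ℝ, 0 < η ∧ 0 < R₁ ∧ ∀ x y : EuclideanSpace ℝ (Fin d),
      R₁ ≤ ‖x - y‖ → ⟪x - y, V x - V y⟫ ≤ -η * ‖x - y‖ ^ 2 := by
  classical
  have hVd : Differentiable ℝ V := hV.differentiable one_ne_zero
  have hfc : Continuous (fun z => fderiv ℝ V z) := hV.continuous_fderiv one_ne_zero
  obtain ⟨z₀, hz₀, hmax⟩ :=
    (isCompact_closedBall (0 : EuclideanSpace ℝ (Fin d)) R₀).exists_isMaxOn
      ⟨0, by simp [hR₀.le]⟩ (continuous_norm.comp hfc).continuousOn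
  set M := ‖fderiv ℝ V z₀‖ with hMdef
  have hM0 : 0 ≤ M := norm_nonneg _
  set C := M + K_V with hCdef
  have hC0 : 0 < C := by positivity
  refine ⟨K_V / 2, max 1 (4 * R₀ * C / K_V), by positivity,
    lt_of_lt_of_le one_pos (le_max_left _ _), ?_⟩
  intro x y hr
  set u : EuclideanSpace ℝ (Fin d) := x - y with hu
  set r : ℝ := ‖u‖ with hrdef
  have hr1 : (1 : ℝ) ≤ r := le_trans (le_max_left _ _) hr
  have hrb : 4 * R₀ * C / K_V ≤ r := le_trans (le_max_right _ _) hr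
  have hr0 : 0 < r := lt_of_lt_of_le one_pos hr1
  set c : ℝ → EuclideanSpace ℝ (Fin d) := fun t => y + t • u with hcdef
  have hc : Continuous c := by
    apply continuous_const.add
    exact continuous_id.smul continuous_const
  set g : ℝ → ℝ := fun t => ⟪u, (fderiv ℝ V (c t)) u⟫ with hgdef
  have hderiv : ∀ t : ℝ, HasDerivAt (fun s => ⟪u, V (c s)⟫) (g t) t := by
    intro t
    have h1 : HasDerivAt c u t := by
      have := ((hasDerivAt_id t).smul_const u).const_add y
      simpa [hcdef] using this
    have h2 : HasDerivAt (fun s => V (c s)) ((fderiv ℝ V (c t)) u) t :=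
      (hVd (c t)).hasFDerivAt.comp_hasDerivAt t h1
    have h3 := (hasDerivAt_const t u).inner ℝ h2
    simpa using h3
  have hgcont : Continuous g := by
    apply continuous_const.inner
    exact (hfc.comp hc).clm_apply continuous_const
  have hFTC : ∫ t in (0:ℝ)..1, g t = ⟪u, V x⟫ - ⟪u, V y⟫ := by
    have := intervalIntegral.integral_eq_sub_of_hasDerivAt
      (f := fun s => ⟪u, V (c s)⟫) (f' := g)
      (fun t _ => hderiv t) (hgcont.intervalIntegrable 0 1)
    have hc1 : c 1 = x := by simp [hcdef, hu]
    have hc0 : c 0 = y := by simp [hcdef]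
    rw [this]
    simp only [hc1, hc0]
  -- sets
  set bad : Set ℝ := {t : ℝ | ‖c t‖ < R₀} with hbaddef
  have hbadmeas : MeasurableSet bad :=
    (isOpen_lt (continuous_norm.comp hc) continuous_const).measurableSet
  set s : Set ℝ := Set.Ioc (0:ℝ) 1 with hsdef
  -- pointwise bounds
  have hgood : ∀ t : ℝ, t ∉ bad → g t ≤ -K_V * r ^ 2 := by
    intro t ht
    have hR : R₀ ≤ ‖c t‖ := le_of_not_gt ht
    have hnorm : ‖r⁻¹ • u‖ = 1 := by
      rw [norm_smul, Real.norm_eq_abs, abs_of_pos (inv_pos.2 hr0), ← hrdef]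
      field_simp
    have := hdiss (r⁻¹ • u) (c t) hnorm hR
    have hexp : ⟪r⁻¹ • u, (fderiv ℝ V (c t)) (r⁻¹ • u)⟫ = r⁻¹ * (r⁻¹ * g t) := by
      rw [(fderiv ℝ V (c t)).map_smul, real_inner_smul_left, real_inner_smul_right]
    rw [hexp] at this
    have hr2 : (0:ℝ) < r ^ 2 := by positivity
    have h2 := mul_le_mul_of_nonneg_left this (le_of_lt hr2)
    have e : r ^ 2 * (r⁻¹ * (r⁻¹ * g t)) = g t := by
      field_simp
    linarith [h2, e]
  have hbad : ∀ t : ℝ, t ∈ bad → g t ≤ M * r ^ 2 := by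
    intro t ht
    have hball : c t ∈ Metric.closedBall (0 : EuclideanSpace ℝ (Fin d)) R₀ := by
      simp [Metric.mem_closedBall, dist_zero_right]
      exact le_of_lt ht
    have hMle : ‖fderiv ℝ V (c t)‖ ≤ M := hmax hball
    have h1 : g t ≤ ‖u‖ * ‖(fderiv ℝ V (c t)) u‖ := real_inner_le_norm _ _
    have h2 : ‖(fderiv ℝ V (c t)) u‖ ≤ ‖fderiv ℝ V (c t)‖ * ‖u‖ :=
      (fderiv ℝ V (c t)).le_opNorm u
    rw [← hrdef] at h1 h2
    nlinarith [norm_nonneg ((fderiv ℝ V (c t)) u), hr0]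
  -- h := g + K_V r²
  set h : ℝ → ℝ := fun t => g t + K_V * r ^ 2 with hhdef
  have hhcont : Continuous h := hgcont.add continuous_const
  have hgint : IntegrableOn g s := hgcont.integrableOn_Ioc
  have hhint : IntegrableOn h s := hhcont.integrableOn_Ioc
  -- measure bound
  have hmeas_bound : (volume (s ∩ bad)).toReal ≤ 2 * R₀ / r := by
    have hdiam : volume (s ∩ bad) ≤ ENNReal.ofReal (2 * R₀ / r) := by
      refine le_trans (Real.volume_le_diam _) (EMetric.diam_le ?_)
      intro t₁ h₁ t₂ h₂
      rw [edist_dist]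
      apply ENNReal.ofReal_le_ofReal
      have e1 : ‖c t₁ - c t₂‖ = |t₁ - t₂| * r := by
        have : c t₁ - c t₂ = (t₁ - t₂) • u := by
          simp [hcdef, sub_smul]
        rw [this, norm_smul, Real.norm_eq_abs, ← hrdef]
      have e2 : ‖c t₁ - c t₂‖ < 2 * R₀ := by
        calc ‖c t₁ - c t₂‖ ≤ ‖c t₁‖ + ‖c t₂‖ := norm_sub_le _ _
        _ < 2 * R₀ := by
            have := h₁.2; have := h₂.2
            simp only [hbaddef, Set.mem_setOf_eq] at *
            linarith
      rw [Real.dist_eq, le_div_iff₀ hr0]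
      calc |t₁ - t₂| * r = ‖c t₁ - c t₂‖ := e1.symm
      _ ≤ 2 * R₀ := e2.le
    calc (volume (s ∩ bad)).toReal ≤ (ENNReal.ofReal (2 * R₀ / r)).toReal :=
          ENNReal.toReal_mono ENNReal.ofReal_ne_top hdiam
    _ = 2 * R₀ / r := ENNReal.toReal_ofReal (by positivity)
  -- integral bounds
  have hsplit : (∫ t in s ∩ bad, h t) + (∫ t in s \ bad, h t) = ∫ t in s, h t :=
    integral_inter_add_diff hbadmeas hhint
  have hI1 : (∫ t in s ∩ bad, h t) ≤ (2 * R₀ / r) * (C * r ^ 2) := by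
    have hmono : (∫ t in s ∩ bad, h t) ≤ ∫ _t in s ∩ bad, C * r ^ 2 := by
      apply setIntegral_mono_on (hhint.mono_set Set.inter_subset_left)
        (integrableOn_const (lt_of_le_of_lt (measure_mono Set.inter_subset_left)
          (by simp [hsdef])).ne)
        (measurableSet_Ioc.inter hbadmeas)
      intro t ht
      have := hbad t ht.2
      simp only [hhdef, hCdef]
      nlinarith
    rw [setIntegral_const] at hmono
    refine le_trans hmono ?_
    rw [smul_eq_mul]
    apply mul_le_mul_of_nonneg_right hmeas_bound (by positivity)
  have hI2 : (∫ t in s \ bad, h t) ≤ 0 := by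
    apply setIntegral_nonpos (measurableSet_Ioc.diff hbadmeas)
    intro t ht
    have := hgood t ht.2
    simp only [hhdef]
    linarith
  have hIh : (∫ t in s, h t) ≤ (2 * R₀ / r) * (C * r ^ 2) := by
    rw [← hsplit]; linarith
  have hIg : (∫ t in s, g t) = (∫ t in s, h t) - K_V * r ^ 2 := by
    have : (∫ t in s, h t) = (∫ t in s, g t) + ∫ _t in s, K_V * r ^ 2 :=
      integral_add hgint (integrableOn_const (by simp [hsdef]))
    rw [setIntegral_const] at this
    simp only [hsdef, Real.volume_Ioc] at this
    norm_num at this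
    linarith
  -- conclude
  have hinner : ⟪u, V x - V y⟫ = ∫ t in s, g t := by
    rw [inner_sub_right, ← hFTC, intervalIntegral.integral_of_le (by norm_num : (0:ℝ) ≤ 1)]

  rw [hinner, hIg]
  have hfinal : (2 * R₀ / r) * (C * r ^ 2) - K_V * r ^ 2 ≤ -(K_V / 2) * r ^ 2 := by
    have h4 : 4 * R₀ * C ≤ K_V * r := by
      rw [div_le_iff₀ hKV] at hrb; linarith
    have key : (2 * R₀ / r) * (C * r ^ 2) = 2 * R₀ * C * r := by
      field_simp
    rw [key]
    have h5 : (2 * R₀ * C) * r ≤ (K_V * r / 2) * r :=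
      mul_le_mul_of_nonneg_right (by nlinarith [h4]) hr0.le
    have hrr : r ^ 2 = r * r := pow_two r
    rw [hrr]
    linarith
  linarith [hIh]
end

section
/- There exist constants η > 0 and R_1 > 0 such that ⟨x, V(x)⟩ ≤ −η ‖x‖² for every x ∈ ℝ^d with ‖x‖ ≥ R_1. -/
open scoped RealInnerProductSpace

/-- Lemma 2.2(c): dissipativity of `V` at infinity. -/
theorem lemma_2_2_c (d : ℕ) (hd : 1 ≤ d)
    (V : EuclideanSpace ℝ (Fin d) → EuclideanSpace ℝ (Fin d))
    (hV : ContDiff ℝ 1 V)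
    (K_V R₀ : ℝ) (hKV : 0 < K_V) (hR₀ : 0 < R₀)
    (hdiss : ∀ (h x : EuclideanSpace ℝ (Fin d)), ‖h‖ = 1 → R₀ ≤ ‖x‖ →
      ⟪h, fderiv ℝ V x h⟫ ≤ -K_V) :
    ∃ η R₁ : ℝ, 0 < η ∧ 0 < R₁ ∧ ∀ x : EuclideanSpace ℝ (Fin d),
      R₁ ≤ ‖x‖ → ⟪x, V x⟫ ≤ -η * ‖x‖ ^ 2 := by
  have hVdiff : Differentiable ℝ V := hV.differentiable one_ne_zero
  -- bound of `V` on the sphere of radius R₀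
  obtain ⟨M, hM⟩ : ∃ M, ∀ y ∈ Metric.sphere (0 : EuclideanSpace ℝ (Fin d)) R₀, ‖V y‖ ≤ M :=
    (isCompact_sphere 0 R₀).exists_bound_of_continuousOn hV.continuous.continuousOn
  refine ⟨K_V / 2, max (R₀ + 1) (2 * (M + K_V * R₀) / K_V), by positivity,
    lt_of_lt_of_le (by linarith) (le_max_left _ _), ?_⟩
  intro x hx
  have hxR₀ : R₀ + 1 ≤ ‖x‖ := le_trans (le_max_left _ _) hx
  have hxM : 2 * (M + K_V * R₀) / K_V ≤ ‖x‖ := le_trans (le_max_right _ _) hx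
  have hxpos : 0 < ‖x‖ := by linarith
  set a : ℝ := R₀ / ‖x‖ with ha
  have hapos : 0 < a := div_pos hR₀ hxpos
  have ha1 : a ≤ 1 := by
    rw [div_le_one hxpos]; linarith
  have hax : a * ‖x‖ = R₀ := div_mul_cancel₀ _ hxpos.ne'
  -- the function along the ray
  set φ : ℝ → ℝ := fun t => ⟪x, V (t • x)⟫ with hφ
  have hφderiv : ∀ t : ℝ, HasDerivAt φ (⟪x, fderiv ℝ V (t • x) x⟫) t := by
    intro t
    have h1 : HasDerivAt (fun t : ℝ => t • x) ((1 : ℝ) • x) t :=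
      (hasDerivAt_id t).smul_const x
    rw [one_smul] at h1
    have h2 : HasDerivAt (fun t : ℝ => V (t • x)) (fderiv ℝ V (t • x) x) t :=
      (hVdiff (t • x)).hasFDerivAt.comp_hasDerivAt t h1
    exact ((innerSL ℝ x).hasFDerivAt.comp_hasDerivAt t h2 : _)
  -- derivative bound on [a, 1]
  have hderiv_bd : ∀ t ∈ Set.Icc a 1, ⟪x, fderiv ℝ V (t • x) x⟫ ≤ -K_V * ‖x‖ ^ 2 := by
    intro t ht
    have htpos : 0 < t := lt_of_lt_of_le hapos ht.1
    have hnorm : R₀ ≤ ‖t • x‖ := by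
      rw [norm_smul, Real.norm_eq_abs, abs_of_pos htpos]
      calc R₀ = a * ‖x‖ := hax.symm
        _ ≤ t * ‖x‖ := by nlinarith [ht.1]
    set h : EuclideanSpace ℝ (Fin d) := ‖x‖⁻¹ • x with hh
    have hhnorm : ‖h‖ = 1 := by
      rw [hh, norm_smul, Real.norm_eq_abs, abs_of_pos (inv_pos.2 hxpos),
        inv_mul_cancel₀ hxpos.ne']
    have key := hdiss h (t • x) hhnorm hnorm
    have hxh : x = ‖x‖ • h := by
      rw [hh, smul_smul, mul_inv_cancel₀ hxpos.ne', one_smul]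
    calc ⟪x, fderiv ℝ V (t • x) x⟫
        = ⟪(‖x‖ : ℝ) • h, fderiv ℝ V (t • x) ((‖x‖ : ℝ) • h)⟫ := by rw [← hxh]
      _ = ‖x‖ * (‖x‖ * ⟪h, fderiv ℝ V (t • x) h⟫) := by
          rw [map_smul, real_inner_smul_left, real_inner_smul_right]
      _ ≤ ‖x‖ * (‖x‖ * (-K_V)) := by
          apply mul_le_mul_of_nonneg_left _ hxpos.le
          exact mul_le_mul_of_nonneg_left key hxpos.le
      _ = -K_V * ‖x‖ ^ 2 := by ring
  -- auxiliary antitone function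
  set ψ : ℝ → ℝ := fun t => φ t + K_V * ‖x‖ ^ 2 * t with hψ
  have hψderiv : ∀ t : ℝ, HasDerivAt ψ (⟪x, fderiv ℝ V (t • x) x⟫ + K_V * ‖x‖ ^ 2) t := by
    intro t
    have h2 : HasDerivAt (fun t : ℝ => K_V * ‖x‖ ^ 2 * t) (K_V * ‖x‖ ^ 2) t := by
      simpa using (hasDerivAt_id t).const_mul (K_V * ‖x‖ ^ 2)
    exact (hφderiv t).add h2
  have hanti : AntitoneOn ψ (Set.Icc a 1) := by
    apply antitoneOn_of_deriv_nonpos (convex_Icc a 1)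
    · exact fun t _ => (hψderiv t).continuousAt.continuousWithinAt
    · exact fun t _ => ((hψderiv t).differentiableAt).differentiableWithinAt
    · intro t ht
      rw [interior_Icc] at ht
      rw [(hψderiv t).deriv]
      have := hderiv_bd t ⟨ht.1.le, ht.2.le⟩
      linarith
  have h1mem : (1 : ℝ) ∈ Set.Icc a 1 := ⟨ha1, le_rfl⟩
  have hamem : a ∈ Set.Icc a 1 := ⟨le_rfl, ha1⟩
  have key := hanti hamem h1mem ha1
  -- ψ 1 ≤ ψ a
  have hφa : φ a ≤ ‖x‖ * M := by
    have hmem : a • x ∈ Metric.sphere (0 : EuclideanSpace ℝ (Fin d)) R₀ := by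
      simp only [Metric.mem_sphere, dist_zero_right, norm_smul, Real.norm_eq_abs,
        abs_of_pos hapos]
      exact hax
    calc φ a ≤ ‖x‖ * ‖V (a • x)‖ := real_inner_le_norm _ _
      _ ≤ ‖x‖ * M := mul_le_mul_of_nonneg_left (hM _ hmem) hxpos.le
  have hφ1 : φ 1 = ⟪x, V x⟫ := by rw [hφ]; simp
  have hψ1 : ψ 1 = ⟪x, V x⟫ + K_V * ‖x‖ ^ 2 := by rw [hψ]; simp [hφ1]
  have hψa : ψ a = φ a + K_V * ‖x‖ * R₀ := by
    have h3 : K_V * ‖x‖ ^ 2 * a = K_V * ‖x‖ * R₀ := by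
      rw [show K_V * ‖x‖ ^ 2 * a = K_V * ‖x‖ * (a * ‖x‖) by ring, hax]
    have h4 : ψ a = φ a + K_V * ‖x‖ ^ 2 * a := rfl
    rw [h4, h3]
  rw [hψ1, hψa] at key
  -- final arithmetic
  have hMbd : 2 * (M + K_V * R₀) ≤ K_V * ‖x‖ := by
    rw [div_le_iff₀ hKV] at hxM; linarith
  nlinarith [hφa, key, sq_nonneg ‖x‖, mul_pos hKV hxpos]
end

section
/- For all x, y, z ∈ ℝ^d one has ‖Φ(x − y) − Φ(x − z)‖ ≤ K_1 ‖y − z‖ (1 + ‖x‖^r) (1 + ‖y‖^r + ‖z‖^r), where K_1 = max(K, 2^{r+1}). -/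
lemma aux_add_pow (a b : ℝ) (ha : 0 ≤ a) (hb : 0 ≤ b) (r : ℕ) :
    (a + b) ^ r ≤ 2 ^ r * (a ^ r + b ^ r) := by
  have h1 : (a + b) ^ r ≤ (2 * max a b) ^ r := by
    apply pow_le_pow_left₀ (by linarith)
    rcases le_total a b with h | h
    · simp [max_eq_right h]; linarith
    · simp [max_eq_left h]; linarith
  have h2 : (max a b) ^ r ≤ a ^ r + b ^ r := by
    rcases le_total a b with h | h
    · simp [max_eq_right h]; positivity
    · simp [max_eq_left h]; positivity
  calc (a + b) ^ r ≤ (2 * max a b) ^ r := h1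
    _ = 2 ^ r * (max a b) ^ r := mul_pow 2 _ r
    _ ≤ 2 ^ r * (a ^ r + b ^ r) := by
        apply mul_le_mul_of_nonneg_left h2 (by positivity)

/-- Lemma 2.3(c): Lipschitz-type bound in the second argument of the difference. -/
theorem lemma_2_3_c (d : ℕ) (hd : 1 ≤ d) (K : ℝ) (hK : 0 < K) (r : ℕ)
    (Φ : EuclideanSpace ℝ (Fin d) → EuclideanSpace ℝ (Fin d))
    (hΦ0 : Φ 0 = 0)
    (hodd : ∀ x : EuclideanSpace ℝ (Fin d), Φ (-x) = -Φ x)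
    (hΦ : ∀ x y : EuclideanSpace ℝ (Fin d),
      ‖Φ x - Φ y‖ ≤ ‖x - y‖ * (K + ‖x‖ ^ r + ‖y‖ ^ r)) :
    ∀ x y z : EuclideanSpace ℝ (Fin d),
      ‖Φ (x - y) - Φ (x - z)‖ ≤
        max K (2 ^ (r + 1)) * ‖y - z‖ * (1 + ‖x‖ ^ r) * (1 + ‖y‖ ^ r + ‖z‖ ^ r) := by
  intro x y z
  set K₁ : ℝ := max K (2 ^ (r + 1)) with hK₁def
  have hKle : K ≤ K₁ := le_max_left _ _
  have h2le : (2 : ℝ) ^ (r + 1) ≤ K₁ := le_max_right _ _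
  have h := hΦ (x - y) (x - z)
  have hnorm : ‖(x - y) - (x - z)‖ = ‖y - z‖ := by
    rw [show (x - y) - (x - z) = z - y by abel, norm_sub_rev]
  rw [hnorm] at h
  set X := ‖x‖ ^ r with hX
  set Y := ‖y‖ ^ r with hY
  set Z := ‖z‖ ^ r with hZ
  have hX0 : 0 ≤ X := by positivity
  have hY0 : 0 ≤ Y := by positivity
  have hZ0 : 0 ≤ Z := by positivity
  have hA0 : (0 : ℝ) ≤ ‖y - z‖ := norm_nonneg _
  have hxy : ‖x - y‖ ^ r ≤ 2 ^ r * (X + Y) := by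
    calc ‖x - y‖ ^ r ≤ (‖x‖ + ‖y‖) ^ r :=
          pow_le_pow_left₀ (norm_nonneg _) (norm_sub_le _ _) r
      _ ≤ 2 ^ r * (X + Y) := aux_add_pow _ _ (norm_nonneg _) (norm_nonneg _) r
  have hxz : ‖x - z‖ ^ r ≤ 2 ^ r * (X + Z) := by
    calc ‖x - z‖ ^ r ≤ (‖x‖ + ‖z‖) ^ r :=
          pow_le_pow_left₀ (norm_nonneg _) (norm_sub_le _ _) r
      _ ≤ 2 ^ r * (X + Z) := aux_add_pow _ _ (norm_nonneg _) (norm_nonneg _) r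
  have hK₁0 : 0 ≤ K₁ := le_trans hK.le hKle
  have h2r : (2:ℝ) * 2 ^ r ≤ K₁ := by
    have : (2:ℝ) ^ (r+1) = 2 * 2 ^ r := by ring
    linarith [h2le, this.symm.le.trans h2le]
  have h2r' : (2:ℝ) ^ r ≤ K₁ := by nlinarith [pow_pos (by norm_num : (0:ℝ) < 2) r]
  have hkey : K + ‖x - y‖ ^ r + ‖x - z‖ ^ r ≤ K₁ * (1 + X) * (1 + Y + Z) := by
    nlinarith [mul_nonneg hX0 hY0, mul_nonneg hX0 hZ0,
      mul_nonneg (mul_nonneg hK₁0 hX0) hY0, mul_nonneg (mul_nonneg hK₁0 hX0) hZ0,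
      mul_le_mul_of_nonneg_right h2r hX0,
      mul_le_mul_of_nonneg_right h2r' hY0,
      mul_le_mul_of_nonneg_right h2r' hZ0]
  calc ‖Φ (x - y) - Φ (x - z)‖ ≤ ‖y - z‖ * (K + ‖x - y‖ ^ r + ‖x - z‖ ^ r) := h
    _ ≤ ‖y - z‖ * (K₁ * (1 + X) * (1 + Y + Z)) := mul_le_mul_of_nonneg_left hkey hA0
    _ = K₁ * ‖y - z‖ * (1 + X) * (1 + Y + Z) := by ring
end

section
/- For all x, y ∈ ℝ^d and every n ∈ ℕ one has ⟨x ‖x‖^n − y ‖y‖^n, Φ(x − y)⟩ ≥ 0. -/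
open scoped RealInnerProductSpace

/-- Lemma 2.3(d): for a rotationally invariant interaction function `Φ`,
`⟨x‖x‖ⁿ − y‖y‖ⁿ, Φ(x−y)⟩ ≥ 0`. -/
theorem lemma_2_3_d (d : ℕ) (hd : 1 ≤ d)
    (φ : ℝ → ℝ) (hφmono : MonotoneOn φ (Set.Ici 0))
    (hφnonneg : ∀ u : ℝ, 0 ≤ u → 0 ≤ φ u) (hφ0 : φ 0 = 0)
    (Φ : EuclideanSpace ℝ (Fin d) → EuclideanSpace ℝ (Fin d))
    (hΦ0 : Φ 0 = 0)
    (hΦ : ∀ x : EuclideanSpace ℝ (Fin d), x ≠ 0 → Φ x = (φ ‖x‖ / ‖x‖) • x) :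
    ∀ (x y : EuclideanSpace ℝ (Fin d)) (n : ℕ),
      0 ≤ ⟪‖x‖ ^ n • x - ‖y‖ ^ n • y, Φ (x - y)⟫ := by
  intro x y n
  rcases eq_or_ne x y with rfl | hxy
  · simp [hΦ0]
  · have hsub : x - y ≠ 0 := sub_ne_zero.mpr hxy
    rw [hΦ (x - y) hsub, real_inner_smul_right]
    have hc : 0 ≤ φ ‖x - y‖ / ‖x - y‖ :=
      div_nonneg (hφnonneg _ (norm_nonneg _)) (norm_nonneg _)
    apply mul_nonneg hc
    have expand : ⟪‖x‖ ^ n • x - ‖y‖ ^ n • y, x - y⟫ =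
        ‖x‖ ^ n * ‖x‖ ^ 2 + ‖y‖ ^ n * ‖y‖ ^ 2 - (‖x‖ ^ n + ‖y‖ ^ n) * ⟪x, y⟫ := by
      rw [inner_sub_left, inner_sub_right, inner_sub_right, real_inner_smul_left,
        real_inner_smul_left, real_inner_smul_left, real_inner_smul_left,
        real_inner_self_eq_norm_sq, real_inner_self_eq_norm_sq, real_inner_comm y x]
      ring
    rw [expand]
    set a := ‖x‖ with ha
    set b := ‖y‖ with hb
    have ha0 : 0 ≤ a := norm_nonneg x
    have hb0 : 0 ≤ b := norm_nonneg y
    have ht : ⟪x, y⟫ ≤ a * b := real_inner_le_norm x y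
    have hpn : 0 ≤ a ^ n := pow_nonneg ha0 n
    have hqn : 0 ≤ b ^ n := pow_nonneg hb0 n
    have key : 0 ≤ (a - b) * (a * a ^ n - b * b ^ n) := by
      rcases le_total a b with h | h
      · have hp := pow_le_pow_left₀ ha0 h (n + 1)
        rw [pow_succ, pow_succ] at hp
        nlinarith
      · have hp := pow_le_pow_left₀ hb0 h (n + 1)
        rw [pow_succ, pow_succ] at hp
        nlinarith
    have hmul : (a ^ n + b ^ n) * ⟪x, y⟫ ≤ (a ^ n + b ^ n) * (a * b) :=
      mul_le_mul_of_nonneg_left ht (by linarith)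
    nlinarith [key, hmul]
end

section
/- For all x, y ∈ ℝ^d one has ⟨x − y, b(x) − b(y)⟩ ≥ 0; that is, the averaged interaction drift b is monotone. -/
open MeasureTheory
open scoped RealInnerProductSpace

/-- Lemma 2.4(b): the averaged interaction drift `b(x) = ∫ Φ(x − y) dμ(y)` is monotone. -/
theorem lemma_2_4_b (d : ℕ) (hd : 1 ≤ d) (K : ℝ) (hK : 0 < K) (r : ℕ)
    (φ : ℝ → ℝ) (hφmono : MonotoneOn φ (Set.Ici 0))
    (hφnonneg : ∀ u : ℝ, 0 ≤ u → 0 ≤ φ u) (hφ0 : φ 0 = 0)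
    (Φ : EuclideanSpace ℝ (Fin d) → EuclideanSpace ℝ (Fin d))
    (hΦ0 : Φ 0 = 0)
    (hΦrot : ∀ x : EuclideanSpace ℝ (Fin d), x ≠ 0 → Φ x = (φ ‖x‖ / ‖x‖) • x)
    (hΦ : ∀ x y : EuclideanSpace ℝ (Fin d),
      ‖Φ x - Φ y‖ ≤ ‖x - y‖ * (K + ‖x‖ ^ r + ‖y‖ ^ r))
    (μ : Measure (EuclideanSpace ℝ (Fin d))) [IsProbabilityMeasure μ]
    (hmom : Integrable (fun y : EuclideanSpace ℝ (Fin d) => ‖y‖ ^ (r + 1)) μ)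
    (b : EuclideanSpace ℝ (Fin d) → EuclideanSpace ℝ (Fin d))
    (hb : ∀ x, b x = ∫ y, Φ (x - y) ∂μ) :
    ∀ x y : EuclideanSpace ℝ (Fin d), 0 ≤ ⟪x - y, b x - b y⟫ := by
  -- Φ is continuous
  have hΦcont : Continuous Φ := by
    rw [continuous_iff_continuousAt]
    intro x
    rw [ContinuousAt, tendsto_iff_norm_sub_tendsto_zero]
    have hbnd : Filter.Tendsto (fun y : EuclideanSpace ℝ (Fin d) =>
        ‖y - x‖ * (K + ‖y‖ ^ r + ‖x‖ ^ r)) (nhds x) (nhds 0) := by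
      have hc : Continuous (fun y : EuclideanSpace ℝ (Fin d) =>
          ‖y - x‖ * (K + ‖y‖ ^ r + ‖x‖ ^ r)) := by fun_prop
      have := hc.tendsto x
      simpa using this
    exact squeeze_zero (fun y => norm_nonneg _) (fun y => hΦ y x) hbnd
  -- pointwise monotonicity of Φ
  have hmono : ∀ a c : EuclideanSpace ℝ (Fin d), 0 ≤ ⟪a - c, Φ a - Φ c⟫ := by
    intro a c
    by_cases ha : a = 0
    · by_cases hc : c = 0
      · simp [ha, hc]
      · rw [ha, hΦ0, hΦrot c hc]
        have : ⟪(0 : EuclideanSpace ℝ (Fin d)) - c, 0 - (φ ‖c‖ / ‖c‖) • c⟫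
            = (φ ‖c‖ / ‖c‖) * ⟪c, c⟫ := by
          rw [zero_sub, zero_sub, inner_neg_neg, real_inner_smul_right]
        rw [this]
        apply mul_nonneg (div_nonneg (hφnonneg _ (norm_nonneg _)) (norm_nonneg _))
        exact real_inner_self_nonneg
    · by_cases hc : c = 0
      · rw [hc, hΦ0, hΦrot a ha]
        have : ⟪a - (0 : EuclideanSpace ℝ (Fin d)), (φ ‖a‖ / ‖a‖) • a - 0⟫
            = (φ ‖a‖ / ‖a‖) * ⟪a, a⟫ := by
          rw [sub_zero, sub_zero, real_inner_smul_right]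
        rw [this]
        apply mul_nonneg (div_nonneg (hφnonneg _ (norm_nonneg _)) (norm_nonneg _))
        exact real_inner_self_nonneg
      · rw [hΦrot a ha, hΦrot c hc]
        set α := φ ‖a‖ / ‖a‖ with hα
        set β := φ ‖c‖ / ‖c‖ with hβ
        have hna : (0:ℝ) < ‖a‖ := norm_pos_iff.mpr ha
        have hnc : (0:ℝ) < ‖c‖ := norm_pos_iff.mpr hc
        have hαa : α * ‖a‖ = φ ‖a‖ := div_mul_cancel₀ _ hna.ne'
        have hβc : β * ‖c‖ = φ ‖c‖ := div_mul_cancel₀ _ hnc.ne'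
        have hα0 : 0 ≤ α := div_nonneg (hφnonneg _ (norm_nonneg _)) (norm_nonneg _)
        have hβ0 : 0 ≤ β := div_nonneg (hφnonneg _ (norm_nonneg _)) (norm_nonneg _)
        have hexp : ⟪a - c, α • a - β • c⟫
            = α * (‖a‖ * ‖a‖) + β * (‖c‖ * ‖c‖) - (α + β) * ⟪a, c⟫ := by
          rw [inner_sub_left, inner_sub_right, inner_sub_right,
            real_inner_smul_right, real_inner_smul_right,
            real_inner_smul_right, real_inner_smul_right,
            real_inner_self_eq_norm_mul_norm, real_inner_self_eq_norm_mul_norm,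
            real_inner_comm c a]
          ring
        rw [hexp]
        have hcs : ⟪a, c⟫ ≤ ‖a‖ * ‖c‖ := real_inner_le_norm a c
        have hphi : 0 ≤ (‖a‖ - ‖c‖) * (φ ‖a‖ - φ ‖c‖) := by
          rcases le_total ‖a‖ ‖c‖ with h | h
          · have := hφmono (Set.mem_Ici.mpr (norm_nonneg a)) (Set.mem_Ici.mpr (norm_nonneg c)) h
            nlinarith
          · have := hφmono (Set.mem_Ici.mpr (norm_nonneg c)) (Set.mem_Ici.mpr (norm_nonneg a)) h
            nlinarith
        nlinarith [mul_nonneg (add_nonneg hα0 hβ0) (sub_nonneg.mpr hcs)]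
  -- integrability
  have hpow : ∀ s t : ℝ, 0 ≤ s → 0 ≤ t → ∀ n : ℕ,
      (s + t) ^ n ≤ 2 ^ n * (s ^ n + t ^ n) := by
    intro s t hs ht n
    have h1 : s + t ≤ 2 * max s t := by
      rcases le_total s t with h | h <;> simp [max_eq_right, max_eq_left, h] <;> linarith
    calc (s + t) ^ n ≤ (2 * max s t) ^ n :=
          pow_le_pow_left₀ (by positivity) h1 n
      _ = 2 ^ n * (max s t) ^ n := by rw [mul_pow]
      _ ≤ 2 ^ n * (s ^ n + t ^ n) := by
          apply mul_le_mul_of_nonneg_left _ (by positivity)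
          rcases le_total s t with h | h
          · rw [max_eq_right h]; nlinarith [pow_nonneg hs n]
          · rw [max_eq_left h]; nlinarith [pow_nonneg ht n]
  have hnormint : Integrable (fun z : EuclideanSpace ℝ (Fin d) => ‖z‖) μ := by
    apply Integrable.mono' ((integrable_const (1:ℝ)).add hmom)
      (continuous_norm.aestronglyMeasurable)
    filter_upwards with z
    have h1 : ‖z‖ ≤ 1 + ‖z‖ ^ (r + 1) := by
      rcases le_total ‖z‖ 1 with h | h
      · have : (0:ℝ) ≤ ‖z‖ ^ (r+1) := by positivity
        linarith
      · have : ‖z‖ ≤ ‖z‖ ^ (r+1) := le_self_pow₀ h (Nat.succ_ne_zero r)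
        linarith
    simpa using h1
  have hInt : ∀ x : EuclideanSpace ℝ (Fin d), Integrable (fun z => Φ (x - z)) μ := by
    intro x
    have hmeas : AEStronglyMeasurable (fun z => Φ (x - z)) μ :=
      (hΦcont.comp (continuous_const.sub continuous_id)).aestronglyMeasurable
    have hg : Integrable (fun z : EuclideanSpace ℝ (Fin d) =>
        (K + 1) * ‖x‖ + (K + 1) * ‖z‖ + 2 ^ (r+1) * ‖x‖ ^ (r+1) + 2 ^ (r+1) * ‖z‖ ^ (r+1)) μ := by
      exact (((integrable_const _).add (hnormint.const_mul _)).add (integrable_const _)).add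
        (hmom.const_mul _)
    apply Integrable.mono' hg hmeas
    filter_upwards with z
    have h0 : ‖Φ (x - z)‖ ≤ ‖x - z‖ * (K + ‖x - z‖ ^ r + ‖(0:EuclideanSpace ℝ (Fin d))‖ ^ r) := by
      have := hΦ (x - z) 0
      simpa [hΦ0] using this
    have hz0 : ‖(0:EuclideanSpace ℝ (Fin d))‖ ^ r ≤ 1 := by
      simp only [norm_zero]
      exact pow_le_one₀ le_rfl zero_le_one
    have hxz : ‖x - z‖ ≤ ‖x‖ + ‖z‖ := norm_sub_le x z
    have hxz0 : (0:ℝ) ≤ ‖x - z‖ := norm_nonneg _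
    have hstep : ‖x - z‖ * (K + ‖x - z‖ ^ r + ‖(0:EuclideanSpace ℝ (Fin d))‖ ^ r)
        ≤ (K + 1) * ‖x - z‖ + ‖x - z‖ ^ (r+1) := by
      have h1 : ‖x - z‖ ^ (r+1) = ‖x - z‖ * ‖x - z‖ ^ r := by ring
      nlinarith [pow_nonneg hxz0 r]
    have hstep2 : (K + 1) * ‖x - z‖ + ‖x - z‖ ^ (r+1)
        ≤ (K + 1) * ‖x‖ + (K + 1) * ‖z‖ + 2 ^ (r+1) * ‖x‖ ^ (r+1) + 2 ^ (r+1) * ‖z‖ ^ (r+1) := by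
      have h2 : ‖x - z‖ ^ (r+1) ≤ (‖x‖ + ‖z‖) ^ (r+1) :=
        pow_le_pow_left₀ hxz0 hxz _
      have h3 := hpow ‖x‖ ‖z‖ (norm_nonneg x) (norm_nonneg z) (r+1)
      nlinarith [hK]
    calc ‖Φ (x - z)‖ ≤ _ := h0
      _ ≤ _ := hstep
      _ ≤ _ := hstep2
  -- main computation
  intro x y
  have hsub : b x - b y = ∫ z, (Φ (x - z) - Φ (y - z)) ∂μ := by
    rw [hb x, hb y, integral_sub (hInt x) (hInt y)]
  have hint2 : Integrable (fun z => Φ (x - z) - Φ (y - z)) μ := (hInt x).sub (hInt y)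
  rw [hsub, ← integral_inner hint2]
  apply integral_nonneg
  intro z
  have : x - y = (x - z) - (y - z) := by abel
  rw [this]
  exact hmono (x - z) (y - z)
end

section
/- For every t ∈ [0, T] one has ‖Y_t − Z_t‖ ≤ e^{K T} Δ ∫_0^t (1 + ‖Z_s‖^{2q}) ds, where Δ = sup_{t ∈ [0,T]} sup_{x ∈ ℝ^d} ‖b¹(t,x) − b²(t,x)‖ / (1 + ‖x‖^{2q}). -/
set_option maxHeartbeats 1000000

open scoped RealInnerProductSpace

/-- Lemma 2.7 (pathwise form): comparison of two diffusions driven by the same noise path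
but with different drift terms `b¹, b²`, where `b¹` is monotone in the space variable. -/
theorem lemma_2_7 (d : ℕ) (hd : 1 ≤ d) (T : ℝ) (hT : 0 < T) (q : ℕ) (K : ℝ) (hK : 0 < K)
    (V : EuclideanSpace ℝ (Fin d) → EuclideanSpace ℝ (Fin d)) (hVc : Continuous V)
    (hV : ∀ x y : EuclideanSpace ℝ (Fin d), ⟪x - y, V x - V y⟫ ≤ K * ‖x - y‖ ^ 2)
    (b₁ b₂ : ℝ → EuclideanSpace ℝ (Fin d) → EuclideanSpace ℝ (Fin d))
    (hb₁c : ContinuousOn (fun p : ℝ × EuclideanSpace ℝ (Fin d) => b₁ p.1 p.2)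
      (Set.Icc 0 T ×ˢ Set.univ))
    (hb₂c : ContinuousOn (fun p : ℝ × EuclideanSpace ℝ (Fin d) => b₂ p.1 p.2)
      (Set.Icc 0 T ×ˢ Set.univ))
    (hb₁mono : ∀ t ∈ Set.Icc (0:ℝ) T, ∀ x y : EuclideanSpace ℝ (Fin d),
      0 ≤ ⟪x - y, b₁ t x - b₁ t y⟫)
    (Δ : ℝ)
    (hΔ : ∀ t ∈ Set.Icc (0:ℝ) T, ∀ x : EuclideanSpace ℝ (Fin d),
      ‖b₁ t x - b₂ t x‖ / (1 + ‖x‖ ^ (2 * q)) ≤ Δ)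
    (w Y Z : ℝ → EuclideanSpace ℝ (Fin d)) (hw0 : w 0 = 0) (hwc : ContinuousOn w (Set.Icc 0 T))
    (hYc : ContinuousOn Y (Set.Icc 0 T)) (hZc : ContinuousOn Z (Set.Icc 0 T))
    (hY : ∀ t ∈ Set.Icc (0:ℝ) T,
      Y t = Y 0 + (∫ s in (0:ℝ)..t, (V (Y s) - b₁ s (Y s))) + w t)
    (hZ : ∀ t ∈ Set.Icc (0:ℝ) T,
      Z t = Z 0 + (∫ s in (0:ℝ)..t, (V (Z s) - b₂ s (Z s))) + w t)
    (h0 : Y 0 = Z 0) :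
    ∀ t ∈ Set.Icc (0:ℝ) T,
      ‖Y t - Z t‖ ≤ Real.exp (K * T) * Δ * ∫ s in (0:ℝ)..t, (1 + ‖Z s‖ ^ (2 * q)) := by
  have hΔ0 : 0 ≤ Δ :=
    le_trans (div_nonneg (norm_nonneg _) (by positivity)) (hΔ 0 ⟨le_rfl, hT.le⟩ 0)
  set f : ℝ → EuclideanSpace ℝ (Fin d) := fun s => Y s - Z s with hf_def
  set g : ℝ → EuclideanSpace ℝ (Fin d) :=
    fun s => (V (Y s) - b₁ s (Y s)) - (V (Z s) - b₂ s (Z s)) with hg_def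
  set H : ℝ → ℝ := fun s => Δ * (1 + ‖Z s‖ ^ (2 * q)) with hH_def
  -- continuity facts
  have hb₁Y : ContinuousOn (fun s => b₁ s (Y s)) (Set.Icc 0 T) := by
    exact hb₁c.comp (continuousOn_id.prodMk hYc)
      (fun s hs => Set.mk_mem_prod hs (Set.mem_univ _))
  have hb₁Z : ContinuousOn (fun s => b₁ s (Z s)) (Set.Icc 0 T) := by
    exact hb₁c.comp (continuousOn_id.prodMk hZc)
      (fun s hs => Set.mk_mem_prod hs (Set.mem_univ _))
  have hb₂Z : ContinuousOn (fun s => b₂ s (Z s)) (Set.Icc 0 T) := by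
    exact hb₂c.comp (continuousOn_id.prodMk hZc)
      (fun s hs => Set.mk_mem_prod hs (Set.mem_univ _))
  have hgY : ContinuousOn (fun s => V (Y s) - b₁ s (Y s)) (Set.Icc 0 T) :=
    (hVc.comp_continuousOn hYc).sub hb₁Y
  have hgZ : ContinuousOn (fun s => V (Z s) - b₂ s (Z s)) (Set.Icc 0 T) :=
    (hVc.comp_continuousOn hZc).sub hb₂Z
  have hgc : ContinuousOn g (Set.Icc 0 T) := hgY.sub hgZ
  have hHc : ContinuousOn H (Set.Icc 0 T) :=
    (continuousOn_const.mul (continuousOn_const.add ((hZc.norm).pow _))) |>.congr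
      (fun s _ => rfl)
  have hH0 : ∀ s, 0 ≤ H s := fun s => mul_nonneg hΔ0 (by positivity)
  have hsub : ∀ t ∈ Set.Icc (0:ℝ) T, Set.uIcc (0:ℝ) t ⊆ Set.Icc 0 T := by
    intro t ht
    rw [Set.uIcc_of_le ht.1]
    exact Set.Icc_subset_Icc le_rfl ht.2
  have hintY : ∀ t ∈ Set.Icc (0:ℝ) T,
      IntervalIntegrable (fun s => V (Y s) - b₁ s (Y s)) MeasureTheory.volume 0 t :=
    fun t ht => (hgY.mono (hsub t ht)).intervalIntegrable
  have hintZ : ∀ t ∈ Set.Icc (0:ℝ) T,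
      IntervalIntegrable (fun s => V (Z s) - b₂ s (Z s)) MeasureTheory.volume 0 t :=
    fun t ht => (hgZ.mono (hsub t ht)).intervalIntegrable
  have hintg : ∀ t ∈ Set.Icc (0:ℝ) T, IntervalIntegrable g MeasureTheory.volume 0 t :=
    fun t ht => (hgc.mono (hsub t ht)).intervalIntegrable
  have hintH : ∀ t ∈ Set.Icc (0:ℝ) T, IntervalIntegrable H MeasureTheory.volume 0 t :=
    fun t ht => (hHc.mono (hsub t ht)).intervalIntegrable
  -- f as an integral
  have hfeq : ∀ t ∈ Set.Icc (0:ℝ) T, f t = ∫ s in (0:ℝ)..t, g s := by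
    intro t ht
    have := hY t ht
    have := hZ t ht
    simp only [hf_def, hg_def]
    rw [hY t ht, hZ t ht, intervalIntegral.integral_sub (hintY t ht) (hintZ t ht), h0]
    abel
  have hf0 : f 0 = 0 := by
    rw [hfeq 0 ⟨le_rfl, hT.le⟩, intervalIntegral.integral_same]
  -- continuity of f
  have hfc : ContinuousOn f (Set.Icc 0 T) := hYc.sub hZc
  -- derivative of f at interior points
  have hfd : ∀ s ∈ Set.Ioo (0:ℝ) T, HasDerivAt f (g s) s := by
    intro s hs
    have hsIcc : s ∈ Set.Icc (0:ℝ) T := Set.Ioo_subset_Icc_self hs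
    have hnhds : Set.Icc (0:ℝ) T ∈ nhds s := Icc_mem_nhds hs.1 hs.2
    have hmeas : StronglyMeasurableAtFilter g (nhds s) MeasureTheory.volume :=
      ContinuousOn.stronglyMeasurableAtFilter isOpen_Ioo (hgc.mono Set.Ioo_subset_Icc_self)
        s hs
    have hcont : ContinuousAt g s := hgc.continuousAt hnhds
    have hD : HasDerivAt (fun u => ∫ x in (0:ℝ)..u, g x) (g s) s :=
      intervalIntegral.integral_hasDerivAt_right (hintg s hsIcc) hmeas hcont
    refine hD.congr_of_eventuallyEq ?_
    filter_upwards [hnhds] with u hu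
    exact hfeq u hu
  -- the key estimate: for each ε > 0
  have key : ∀ ε > (0:ℝ), ∀ t ∈ Set.Icc (0:ℝ) T,
      ‖f t‖ ≤ Real.exp (K * T) * (ε + ∫ s in (0:ℝ)..t, H s) := by
    intro ε hε t ht
    set φ : ℝ → ℝ := fun s => Real.sqrt (‖f s‖ ^ 2 + ε ^ 2) with hφ_def
    have hφpos : ∀ s, 0 < φ s := by
      intro s
      apply Real.sqrt_pos.2
      positivity
    have hφge : ∀ s, ‖f s‖ ≤ φ s := by
      intro s
      rw [hφ_def]
      calc ‖f s‖ = Real.sqrt (‖f s‖ ^ 2) := by rw [Real.sqrt_sq (norm_nonneg _)]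
      _ ≤ _ := Real.sqrt_le_sqrt (by nlinarith)
    have hφc : ContinuousOn φ (Set.Icc 0 T) :=
      Real.continuous_sqrt.comp_continuousOn (((hfc.norm).pow 2).add continuousOn_const)
    set G : ℝ → ℝ := fun s => (∫ u in (0:ℝ)..s, H u) - Real.exp (-(K * s)) * φ s with hG_def
    have hGc : ContinuousOn G (Set.Icc 0 T) := by
      apply ContinuousOn.sub
      · have h0T : Set.uIcc (0:ℝ) T = Set.Icc 0 T := Set.uIcc_of_le hT.le
        rw [← h0T]
        exact intervalIntegral.continuousOn_primitive_interval' (hintH T ⟨hT.le, le_rfl⟩)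
          Set.left_mem_uIcc
      · have hec : Continuous fun u : ℝ => Real.exp (-(K * u)) :=
          Real.continuous_exp.comp ((continuous_const.mul continuous_id).neg)
        exact hec.continuousOn.mul hφc
    -- derivative of G at interior points is nonneg
    have hGd : ∀ s ∈ Set.Ioo (0:ℝ) T,
        HasDerivAt G (H s - (-K * Real.exp (-(K * s)) * φ s
          + Real.exp (-(K * s)) * (⟪f s, g s⟫ / φ s))) s := by
      intro s hs
      have hsIcc : s ∈ Set.Icc (0:ℝ) T := Set.Ioo_subset_Icc_self hs
      have hnhds : Set.Icc (0:ℝ) T ∈ nhds s := Icc_mem_nhds hs.1 hs.2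
      have hmeasH : StronglyMeasurableAtFilter H (nhds s) MeasureTheory.volume :=
        ContinuousOn.stronglyMeasurableAtFilter isOpen_Ioo (hHc.mono Set.Ioo_subset_Icc_self)
          s hs
      have hDH : HasDerivAt (fun u => ∫ x in (0:ℝ)..u, H x) (H s) s :=
        intervalIntegral.integral_hasDerivAt_right (hintH s hsIcc) hmeasH
          (hHc.continuousAt hnhds)
      have hDn : HasDerivAt (fun u => ‖f u‖ ^ 2 + ε ^ 2) (2 * ⟪f s, g s⟫) s := by
        have h1 : HasDerivAt (fun u => ⟪f u, f u⟫) (⟪f s, g s⟫ + ⟪g s, f s⟫) s :=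
          (hfd s hs).inner ℝ (hfd s hs)
        have h2 : HasDerivAt (fun u => ‖f u‖ ^ 2 + ε ^ 2) (⟪f s, g s⟫ + ⟪g s, f s⟫) s := by
          refine (h1.congr_of_eventuallyEq ?_).add_const _
          filter_upwards with u
          rw [real_inner_self_eq_norm_sq]
        simpa [real_inner_comm (f s) (g s), two_mul] using h2
      have hDφ : HasDerivAt φ (⟪f s, g s⟫ / φ s) s := by
        have := hDn.sqrt (by positivity)
        convert this using 1
        rw [hφ_def]
        field_simp
      have hDexp : HasDerivAt (fun u => Real.exp (-(K * u))) (-K * Real.exp (-(K * s))) s := by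
        have h1 : HasDerivAt (fun u : ℝ => -(K * u)) (-K) s := by
          simpa using (hasDerivAt_id s).const_mul (-K)
        simpa [mul_comm] using h1.exp
      exact hDH.sub (hDexp.mul hDφ)
    have hGd' : ∀ s ∈ Set.Ioo (0:ℝ) T,
        0 ≤ H s - (-K * Real.exp (-(K * s)) * φ s
          + Real.exp (-(K * s)) * (⟪f s, g s⟫ / φ s)) := by
      intro s hs
      have hsIcc : s ∈ Set.Icc (0:ℝ) T := Set.Ioo_subset_Icc_self hs
      -- inner product bound
      have hb : ‖b₁ s (Z s) - b₂ s (Z s)‖ ≤ H s := by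
        have := hΔ s hsIcc (Z s)
        rw [div_le_iff₀ (by positivity)] at this
        simpa [hH_def, mul_comm] using this
      have hinner : ⟪f s, g s⟫ ≤ K * ‖f s‖ ^ 2 + ‖f s‖ * H s := by
        have hgsplit : g s = (V (Y s) - V (Z s)) - ((b₁ s (Y s) - b₁ s (Z s))
            + (b₁ s (Z s) - b₂ s (Z s))) := by
          simp only [hg_def]; abel
        rw [hgsplit, inner_sub_right, inner_add_right]
        have h1 : ⟪f s, V (Y s) - V (Z s)⟫ ≤ K * ‖f s‖ ^ 2 := hV (Y s) (Z s)
        have h2 : 0 ≤ ⟪f s, b₁ s (Y s) - b₁ s (Z s)⟫ := hb₁mono s hsIcc (Y s) (Z s)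
        have h3 : -(‖f s‖ * H s) ≤ ⟪f s, b₁ s (Z s) - b₂ s (Z s)⟫ := by
          have habs := abs_real_inner_le_norm (f s) (b₁ s (Z s) - b₂ s (Z s))
          have hle : ‖f s‖ * ‖b₁ s (Z s) - b₂ s (Z s)‖ ≤ ‖f s‖ * H s :=
            mul_le_mul_of_nonneg_left hb (norm_nonneg _)
          nlinarith [abs_le.1 habs]
        linarith
      have hφpos' := hφpos s
      have hφge' := hφge s
      have hexp_pos : 0 < Real.exp (-(K * s)) := Real.exp_pos _
      have hexp_le : Real.exp (-(K * s)) ≤ 1 := by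
        rw [Real.exp_le_one_iff]
        nlinarith [hs.1, hK]
      -- ⟪f,g⟫/φ ≤ K φ + H
      have hdivle : ⟪f s, g s⟫ / φ s ≤ K * φ s + H s := by
        rw [div_le_iff₀ hφpos']
        have hfφ2 : ‖f s‖ ^ 2 ≤ φ s ^ 2 := by
          nlinarith [norm_nonneg (f s)]
        calc ⟪f s, g s⟫ ≤ K * ‖f s‖ ^ 2 + ‖f s‖ * H s := hinner
        _ ≤ K * φ s ^ 2 + φ s * H s := by
            have := mul_le_mul_of_nonneg_right (hφge s) (hH0 s)
            nlinarith
        _ = (K * φ s + H s) * φ s := by ring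
      have : -K * Real.exp (-(K * s)) * φ s + Real.exp (-(K * s)) * (⟪f s, g s⟫ / φ s)
          ≤ Real.exp (-(K * s)) * H s := by
        have := mul_le_mul_of_nonneg_left hdivle hexp_pos.le
        nlinarith
      have h2 : Real.exp (-(K * s)) * H s ≤ H s := by
        nlinarith [hH0 s]
      linarith
    -- G is monotone on Icc 0 T
    have hmono : MonotoneOn G (Set.Icc 0 T) := by
      apply monotoneOn_of_deriv_nonneg (convex_Icc 0 T) hGc
      · intro s hs
        rw [interior_Icc] at hs
        exact ((hGd s hs).differentiableAt).differentiableWithinAt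
      · intro s hs
        rw [interior_Icc] at hs
        rw [(hGd s hs).deriv]
        exact hGd' s hs
    have hG0 : G 0 = -ε := by
      simp [hG_def, hφ_def, hf0, Real.sqrt_sq hε.le]
    have hGt := hmono (Set.left_mem_Icc.2 hT.le) ht ht.1
    rw [hG0] at hGt
    -- unfold G t
    have h1 : Real.exp (-(K * t)) * φ t ≤ ε + ∫ u in (0:ℝ)..t, H u := by
      simp only [hG_def] at hGt
      linarith
    have h2 : φ t ≤ Real.exp (K * t) * (ε + ∫ u in (0:ℝ)..t, H u) := by
      have := mul_le_mul_of_nonneg_left h1 (Real.exp_pos (K * t)).le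
      rwa [← mul_assoc, ← Real.exp_add, add_neg_cancel, Real.exp_zero, one_mul] at this
    have hIH : 0 ≤ ∫ u in (0:ℝ)..t, H u := by
      apply intervalIntegral.integral_nonneg ht.1
      intro u _
      exact hH0 u
    calc ‖f t‖ ≤ φ t := hφge t
    _ ≤ Real.exp (K * t) * (ε + ∫ u in (0:ℝ)..t, H u) := h2
    _ ≤ Real.exp (K * T) * (ε + ∫ u in (0:ℝ)..t, H u) := by
        apply mul_le_mul_of_nonneg_right (Real.exp_le_exp.2 ?_) (by linarith)
        nlinarith [ht.2, hK]
  -- conclude by letting ε → 0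
  intro t ht
  have hItg : IntervalIntegrable (fun s => 1 + ‖Z s‖ ^ (2 * q)) MeasureTheory.volume 0 t := by
    apply ContinuousOn.intervalIntegrable
    exact (continuousOn_const.add ((hZc.norm).pow _)).mono (hsub t ht)
  have hIeq : (∫ s in (0:ℝ)..t, H s) = Δ * ∫ s in (0:ℝ)..t, (1 + ‖Z s‖ ^ (2 * q)) := by
    rw [← intervalIntegral.integral_const_mul]
  have hfinal : ∀ ε > (0:ℝ),
      ‖Y t - Z t‖ ≤ Real.exp (K * T) * Δ * (∫ s in (0:ℝ)..t, (1 + ‖Z s‖ ^ (2 * q)))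
        + Real.exp (K * T) * ε := by
    intro ε hε
    have := key ε hε t ht
    rw [hIeq] at this
    calc ‖Y t - Z t‖ = ‖f t‖ := rfl
    _ ≤ Real.exp (K * T) * (ε + Δ * ∫ s in (0:ℝ)..t, (1 + ‖Z s‖ ^ (2 * q))) := this
    _ = Real.exp (K * T) * Δ * (∫ s in (0:ℝ)..t, (1 + ‖Z s‖ ^ (2 * q)))
        + Real.exp (K * T) * ε := by ring
  by_contra hcon
  push_neg at hcon
  set A := Real.exp (K * T) * Δ * ∫ s in (0:ℝ)..t, (1 + ‖Z s‖ ^ (2 * q))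
  have hgap : 0 < ‖Y t - Z t‖ - A := by linarith
  have hε : 0 < (‖Y t - Z t‖ - A) / (2 * Real.exp (K * T)) := by positivity
  have := hfinal _ hε
  have hEpos : 0 < Real.exp (K * T) := Real.exp_pos _
  have heq : Real.exp (K * T) * ((‖Y t - Z t‖ - A) / (2 * Real.exp (K * T)))
      = (‖Y t - Z t‖ - A) / 2 := by
    field_simp
  rw [heq] at this
  linarith
end

section
/- For every t ≥ 0 one has ‖φ(t) − ψ(t)‖ ≤ max(‖φ(0) − ψ(0)‖, R_1); in particular, if ψ is bounded then the solution φ of the deterministic equation φ̇ = V(φ) − Φ(φ − ψ) is bounded and does not explode. -/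
open scoped RealInnerProductSpace

/-- The dissipativity estimate (3.5) of Section 3.1: the solution `φ` of
`φ̇ = V(φ) − Φ(φ − ψ)` stays within distance `max(‖φ(0) − ψ(0)‖, R₁)` of `ψ`. -/
theorem phi_bounded (d : ℕ) (hd : 1 ≤ d)
    (V : EuclideanSpace ℝ (Fin d) → EuclideanSpace ℝ (Fin d)) (hVc : Continuous V)
    (η R₁ : ℝ) (hη : 0 < η) (hR₁ : 0 < R₁)
    (hdiss : ∀ x y : EuclideanSpace ℝ (Fin d), R₁ ≤ ‖x - y‖ →
      ⟪x - y, V x - V y⟫ ≤ -η * ‖x - y‖ ^ 2)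
    (Φ : EuclideanSpace ℝ (Fin d) → EuclideanSpace ℝ (Fin d)) (hΦc : Continuous Φ)
    (hΦpos : ∀ z : EuclideanSpace ℝ (Fin d), 0 ≤ ⟪z, Φ z⟫)
    (ψ φ : ℝ → EuclideanSpace ℝ (Fin d))
    (hψ : ∀ t ≥ (0:ℝ), HasDerivAt ψ (V (ψ t)) t)
    (hφ : ∀ t ≥ (0:ℝ), HasDerivAt φ (V (φ t) - Φ (φ t - ψ t)) t) :
    ∀ t ≥ (0:ℝ), ‖φ t - ψ t‖ ≤ max ‖φ 0 - ψ 0‖ R₁ := by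
  intro t ht
  set M : ℝ := max ‖φ 0 - ψ 0‖ R₁ with hM
  have hM0 : 0 ≤ M := le_trans hR₁.le (le_max_right _ _)
  have hR₁M : R₁ ≤ M := le_max_right _ _
  -- the squared distance and its derivative
  set u : ℝ → EuclideanSpace ℝ (Fin d) := fun x => φ x - ψ x with hu
  set f : ℝ → ℝ := fun x => ⟪u x, u x⟫ with hf
  set f' : ℝ → ℝ := fun x =>
    ⟪u x, V (φ x) - Φ (φ x - ψ x) - V (ψ x)⟫ +
      ⟪V (φ x) - Φ (φ x - ψ x) - V (ψ x), u x⟫ with hf'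
  have hud : ∀ x ≥ (0:ℝ), HasDerivAt u (V (φ x) - Φ (φ x - ψ x) - V (ψ x)) x := by
    intro x hx
    exact (hφ x hx).sub (hψ x hx)
  have hfd : ∀ x ≥ (0:ℝ), HasDerivAt f (f' x) x := by
    intro x hx
    exact (hud x hx).inner ℝ (hud x hx)
  have hfnorm : ∀ x, f x = ‖u x‖ ^ 2 := fun x => real_inner_self_eq_norm_sq _
  -- key estimate: when ‖u x‖ ≥ R₁, f' x < 0
  have key : ∀ x ≥ (0:ℝ), R₁ ≤ ‖u x‖ → f' x < 0 := by
    intro x hx hRx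
    have h1 : ⟪u x, V (φ x) - V (ψ x)⟫ ≤ -η * ‖u x‖ ^ 2 := hdiss (φ x) (ψ x) hRx
    have h2 : 0 ≤ ⟪u x, Φ (φ x - ψ x)⟫ := hΦpos _
    have h3 : ⟪u x, V (φ x) - Φ (φ x - ψ x) - V (ψ x)⟫
        = ⟪u x, V (φ x) - V (ψ x)⟫ - ⟪u x, Φ (φ x - ψ x)⟫ := by
      rw [← inner_sub_right]
      congr 1
      abel
    have h4 : ⟪u x, V (φ x) - Φ (φ x - ψ x) - V (ψ x)⟫ < 0 := by
      rw [h3]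
      have hn : 0 < ‖u x‖ := lt_of_lt_of_le hR₁ hRx
      have hn2 : 0 < ‖u x‖ ^ 2 := pow_pos hn 2
      have : -η * ‖u x‖ ^ 2 < 0 := by nlinarith [mul_pos hη hn2]
      linarith
    have h5 : f' x = 2 * ⟪u x, V (φ x) - Φ (φ x - ψ x) - V (ψ x)⟫ := by
      simp only [hf', real_inner_comm]; ring
    rw [h5]; linarith
  -- fencing: for each δ > 0, f x ≤ M² + δ x on [0, t]
  have fence : ∀ δ > (0:ℝ), ∀ x ∈ Set.Icc (0:ℝ) t, f x ≤ M ^ 2 + δ * x := by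
    intro δ hδ
    have hfc : ContinuousOn f (Set.Icc 0 t) := fun x hx =>
      ((hfd x hx.1).continuousAt).continuousWithinAt
    have hfd' : ∀ x ∈ Set.Ico (0:ℝ) t, HasDerivWithinAt f (f' x) (Set.Ici x) x :=
      fun x hx => (hfd x hx.1).hasDerivWithinAt
    have ha : f 0 ≤ M ^ 2 + δ * 0 := by
      rw [hfnorm]
      have : ‖u 0‖ ≤ M := le_max_left _ _
      nlinarith [norm_nonneg (u 0)]
    have hB : ∀ x : ℝ, HasDerivAt (fun x => M ^ 2 + δ * x) δ x := by
      intro x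
      simpa using ((hasDerivAt_id x).const_mul δ).const_add (M ^ 2)
    refine image_le_of_deriv_right_lt_deriv_boundary hfc hfd' ha hB ?_
    intro x hx hfx
    have hxM : M ^ 2 ≤ f x := by
      rw [hfx]; nlinarith [hx.1]
    have hRx : R₁ ≤ ‖u x‖ := by
      by_contra h
      push_neg at h
      have : f x < M ^ 2 := by
        rw [hfnorm]
        nlinarith [norm_nonneg (u x), hR₁, hR₁M]
      linarith
    exact lt_trans (key x hx.1 hRx) hδ
  -- conclude f t ≤ M², hence the norm bound
  have hft : f t ≤ M ^ 2 := by
    by_contra h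
    push_neg at h
    rcases eq_or_lt_of_le ht with h0 | h0
    · subst h0
      have := fence 1 one_pos 0 ⟨le_refl 0, le_refl 0⟩
      simp only [mul_zero] at this
      linarith
    · have hδ : (0:ℝ) < (f t - M ^ 2) / (2 * t) :=
        div_pos (by linarith) (by linarith)
      have := fence _ hδ t ⟨ht, le_refl t⟩
      have ht' : (f t - M ^ 2) / (2 * t) * t = (f t - M ^ 2) / 2 := by
        field_simp
      rw [ht'] at this
      linarith
  have : ‖u t‖ ^ 2 ≤ M ^ 2 := by rw [← hfnorm]; exact hft
  have h2 := Real.sqrt_le_sqrt this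
  rwa [Real.sqrt_sq (norm_nonneg _), Real.sqrt_sq hM0] at h2
end

section
/- For every integer n ≥ 1 one has 2 E[ξ^{2n+2}] ≤ E[(ξ − ξ̃)^{2n+2}] + 2^{2n+2} (1 + E[ξ^{2n}])². -/
open MeasureTheory ProbabilityTheory Finset

/-- Pointwise bound `|x|^k ≤ 1 + |x|^j` for `k ≤ j`. -/
lemma abs_pow_le_one_add (x : ℝ) {k j : ℕ} (hkj : k ≤ j) :
    |x| ^ k ≤ 1 + |x| ^ j := by
  rcases le_or_gt (|x|) 1 with h | h
  · have : |x| ^ k ≤ 1 := pow_le_one₀ (abs_nonneg x) h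
    have hj : 0 ≤ |x| ^ j := pow_nonneg (abs_nonneg x) j
    linarith
  · have : |x| ^ k ≤ |x| ^ j := pow_le_pow_right₀ h.le hkj
    linarith

/-- The moment inequality for independent centered identically distributed copies
(Step 3 of the proof of Proposition 2.12):
`2 E[ξ^{2n+2}] ≤ E[(ξ − ξ̃)^{2n+2}] + 2^{2n+2} (1 + E[ξ^{2n}])²`. -/
theorem centered_moment_bound {Ω : Type*} [MeasurableSpace Ω]
    (μ : Measure Ω) [IsProbabilityMeasure μ]
    (ξ ξ' : Ω → ℝ) (hξ : Measurable ξ) (hξ' : Measurable ξ')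
    (hind : IndepFun ξ ξ' μ) (hid : IdentDistrib ξ ξ' μ μ)
    (n : ℕ) (hn : 1 ≤ n)
    (hmean : (∫ ω, ξ ω ∂μ) = 0)
    (hmom : Integrable (fun ω => |ξ ω| ^ (2 * n + 2)) μ) :
    2 * (∫ ω, (ξ ω) ^ (2 * n + 2) ∂μ) ≤
      (∫ ω, (ξ ω - ξ' ω) ^ (2 * n + 2) ∂μ) +
        2 ^ (2 * n + 2) * (1 + ∫ ω, (ξ ω) ^ (2 * n) ∂μ) ^ 2 := by
  set m := 2 * n + 2 with hm
  -- integrability of all powers up to m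
  have hintabs : ∀ k ≤ m, Integrable (fun ω => |ξ ω| ^ k) μ := by
    intro k hk
    refine (hmom.add (integrable_const 1)).mono
      ((hξ.abs.pow_const k).aestronglyMeasurable) (Filter.Eventually.of_forall fun ω => ?_)
    simp only [Pi.add_apply]
    rw [Real.norm_of_nonneg (by positivity), Real.norm_of_nonneg (by positivity)]
    have h1 : |ξ ω| ^ k ≤ 1 + |ξ ω| ^ m := abs_pow_le_one_add _ hk
    linarith
  have hint : ∀ k ≤ m, Integrable (fun ω => ξ ω ^ k) μ := by
    intro k hk
    refine (hintabs k hk).mono ((hξ.pow_const k).aestronglyMeasurable)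
      (Filter.Eventually.of_forall fun ω => ?_)
    simp [Real.norm_eq_abs, abs_pow, abs_abs, le_refl]
  have hint' : ∀ k ≤ m, Integrable (fun ω => ξ' ω ^ k) μ := by
    intro k hk
    exact ((hid.comp (measurable_id.pow_const k)).integrable_iff).1 (hint k hk)
  -- equal moments
  have hMeq : ∀ k : ℕ, (∫ ω, ξ' ω ^ k ∂μ) = ∫ ω, ξ ω ^ k ∂μ :=
    fun k => ((hid.comp (measurable_id.pow_const k)).integral_eq).symm
  set M : ℕ → ℝ := fun k => ∫ ω, ξ ω ^ k ∂μ with hM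
  have hM0 : M 0 = 1 := by simp [hM]
  have hM1 : M 1 = 0 := by simpa [hM] using hmean
  -- the bound B on moments
  set B : ℝ := 1 + M (2 * n) with hB
  have hMnonneg : 0 ≤ M (2 * n) := by
    refine integral_nonneg fun ω => ?_
    rw [pow_mul]
    exact pow_nonneg (sq_nonneg _) n
  have hBpos : 0 < B := by simp only [hB]; linarith
  have hMbound : ∀ k ≤ 2 * n, |M k| ≤ B := by
    intro k hk
    have h1 : |M k| ≤ ∫ ω, |ξ ω ^ k| ∂μ := by
      simpa [Real.norm_eq_abs] using norm_integral_le_integral_norm (μ := μ) (fun ω => ξ ω ^ k)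
    have h2 : (∫ ω, |ξ ω ^ k| ∂μ) ≤ ∫ ω, 1 + |ξ ω| ^ (2 * n) ∂μ := by
      refine integral_mono (by simpa [abs_pow] using hintabs k (by omega))
        ((integrable_const 1).add (hintabs (2 * n) (by omega))) fun ω => ?_
      rw [abs_pow]
      exact abs_pow_le_one_add _ hk
    have h3 : (∫ ω, 1 + |ξ ω| ^ (2 * n) ∂μ) = B := by
      rw [integral_add (integrable_const 1) (hintabs (2 * n) (by omega))]
      simp only [integral_const, measure_univ, probReal_univ, ENNReal.toReal_one, smul_eq_mul, one_mul, hB, hM]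
      congr 1
      refine integral_congr_ae (Filter.Eventually.of_forall fun ω => ?_)
      exact Even.pow_abs ⟨n, two_mul n⟩ _
    linarith
  -- independence of powers
  have hindk : ∀ k j : ℕ, IndepFun (fun ω => ξ ω ^ k) (fun ω => ξ' ω ^ j) μ :=
    fun k j => hind.comp (measurable_id.pow_const k) (measurable_id.pow_const j)
  -- expansion of the integral
  have hexp : (∫ ω, (ξ ω - ξ' ω) ^ m ∂μ)
      = ∑ k ∈ range (m + 1), (-1 : ℝ) ^ k * M k * M (m - k) * (m.choose k) := by
    have hptw : ∀ ω, (ξ ω - ξ' ω) ^ m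
        = ∑ k ∈ range (m + 1), (-1 : ℝ) ^ (k + m) * ξ ω ^ k * ξ' ω ^ (m - k) * (m.choose k) :=
      fun ω => sub_pow _ _ m
    have hintk : ∀ k ∈ range (m + 1), Integrable
        (fun ω => (-1 : ℝ) ^ (k + m) * ξ ω ^ k * ξ' ω ^ (m - k) * (m.choose k)) μ := by
      intro k hk
      rw [mem_range] at hk
      have h := ((hindk k (m - k)).integrable_mul (hint k (by omega)) (hint' (m - k) (Nat.sub_le _ _)))
      have := (h.const_mul ((-1 : ℝ) ^ (k + m))).mul_const ((m.choose k : ℝ))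
      refine this.congr (Filter.Eventually.of_forall fun ω => ?_)
      simp only [Pi.mul_apply]; ring
    calc (∫ ω, (ξ ω - ξ' ω) ^ m ∂μ)
        = ∫ ω, ∑ k ∈ range (m + 1),
            (-1 : ℝ) ^ (k + m) * ξ ω ^ k * ξ' ω ^ (m - k) * (m.choose k) ∂μ := by
          exact integral_congr_ae (Filter.Eventually.of_forall fun ω => hptw ω)
      _ = ∑ k ∈ range (m + 1), ∫ ω,
            (-1 : ℝ) ^ (k + m) * ξ ω ^ k * ξ' ω ^ (m - k) * (m.choose k) ∂μ :=
          integral_finset_sum _ hintk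
      _ = ∑ k ∈ range (m + 1), (-1 : ℝ) ^ k * M k * M (m - k) * (m.choose k) := by
          refine Finset.sum_congr rfl fun k hk => ?_
          rw [mem_range] at hk
          have heven : (-1 : ℝ) ^ (k + m) = (-1 : ℝ) ^ k := by
            rw [pow_add]
            have : (-1 : ℝ) ^ m = 1 := Even.neg_one_pow ⟨n + 1, by omega⟩
            rw [this, mul_one]
          have h1 : (∫ ω, (-1 : ℝ) ^ (k + m) * ξ ω ^ k * ξ' ω ^ (m - k) * (m.choose k) ∂μ)
              = (-1 : ℝ) ^ (k + m) * (m.choose k) * ∫ ω, ξ ω ^ k * ξ' ω ^ (m - k) ∂μ := by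
            rw [← integral_const_mul]
            refine integral_congr_ae (Filter.Eventually.of_forall fun ω => ?_)
            ring
          rw [h1, (hindk k (m - k)).integral_fun_mul_eq_mul_integral ((hξ.pow_const k).aestronglyMeasurable)
            ((hξ'.pow_const (m - k)).aestronglyMeasurable), hMeq]
          rw [heven]; ring
  -- peel off the boundary terms
  have hsum : (∑ k ∈ range (m + 1), (-1 : ℝ) ^ k * M k * M (m - k) * (m.choose k))
      = M m + M m + ∑ i ∈ range (2 * n + 1),
        (-1 : ℝ) ^ (i + 1) * M (i + 1) * M (m - (i + 1)) * (m.choose (i + 1)) := by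
    rw [Finset.sum_range_succ, Finset.sum_range_succ']
    have h0 : (-1 : ℝ) ^ 0 * M 0 * M (m - 0) * (m.choose 0) = M m := by
      simp [hM0]
    have hmterm : (-1 : ℝ) ^ m * M m * M (m - m) * (m.choose m) = M m := by
      have : (-1 : ℝ) ^ m = 1 := Even.neg_one_pow ⟨n + 1, by omega⟩
      simp [this, hM0]
    have hrange : m = 2 * n + 1 + 1 := by omega
    rw [h0, hmterm]
    ring
  -- bound the middle terms from below
  have hmid : ∀ i ∈ range (2 * n + 1),
      -((m.choose (i + 1) : ℝ) * B ^ 2) ≤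
        (-1 : ℝ) ^ (i + 1) * M (i + 1) * M (m - (i + 1)) * (m.choose (i + 1)) := by
    intro i hi
    rw [mem_range] at hi
    set k := i + 1 with hk
    rcases eq_or_ne k 1 with h1 | h1
    · have : M k = 0 := by rw [h1]; exact hM1
      rw [this]
      have : (0:ℝ) ≤ (m.choose k : ℝ) * B ^ 2 := by positivity
      simp only [mul_zero, zero_mul, mul_comm]; nlinarith
    rcases eq_or_ne k (2 * n + 1) with h2 | h2
    · have hmk : m - k = 1 := by omega
      rw [hmk, hM1]
      have : (0:ℝ) ≤ (m.choose k : ℝ) * B ^ 2 := by positivity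
      simp only [mul_zero, zero_mul]; nlinarith
    · -- 2 ≤ k ≤ 2n, so both k and m - k are ≤ 2n
      have hk2 : 2 ≤ k := by omega
      have hkle : k ≤ 2 * n := by omega
      have hmkle : m - k ≤ 2 * n := by omega
      have b1 := hMbound k hkle
      have b2 := hMbound (m - k) hmkle
      have habs : |(-1 : ℝ) ^ k * M k * M (m - k) * (m.choose k)| ≤ (m.choose k : ℝ) * B ^ 2 := by
        rw [abs_mul, abs_mul, abs_mul]
        have hpm : |(-1 : ℝ) ^ k| = 1 := abs_neg_one_pow k
        rw [hpm, one_mul, Nat.abs_cast]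
        have hb1 : 0 ≤ |M k| := abs_nonneg _
        have hb2 : 0 ≤ |M (m - k)| := abs_nonneg _
        calc |M k| * |M (m - k)| * (m.choose k : ℝ) ≤ B * B * (m.choose k : ℝ) := by
              apply mul_le_mul_of_nonneg_right _ (by positivity)
              exact mul_le_mul b1 b2 hb2 hBpos.le
          _ = (m.choose k : ℝ) * B ^ 2 := by ring
      have := neg_abs_le ((-1 : ℝ) ^ k * M k * M (m - k) * (m.choose k))
      linarith
  -- bound on the sum of binomial coefficients
  have hchoose : (∑ i ∈ range (2 * n + 1), (m.choose (i + 1) : ℝ)) ≤ 2 ^ m := by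
    have hnat : (∑ i ∈ range (2 * n + 1), m.choose (i + 1)) ≤ 2 ^ m := by
      calc (∑ i ∈ range (2 * n + 1), m.choose (i + 1))
          ≤ ∑ k ∈ range (m + 1), m.choose k := by
            have : (∑ i ∈ range (2 * n + 1), m.choose (i + 1))
                = ∑ k ∈ (range (2 * n + 1)).image (· + 1), m.choose k := by
              rw [Finset.sum_image (by intro a _ b _ h; simp only at h; omega)]
            rw [this]
            refine Finset.sum_le_sum_of_subset ?_
            intro x hx
            simp only [Finset.mem_image, Finset.mem_range] at hx ⊢
            omega
        _ = 2 ^ m := Nat.sum_range_choose m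
    calc (∑ i ∈ range (2 * n + 1), (m.choose (i + 1) : ℝ))
        = ((∑ i ∈ range (2 * n + 1), m.choose (i + 1) : ℕ) : ℝ) := by push_cast; ring
      _ ≤ ((2 ^ m : ℕ) : ℝ) := by exact_mod_cast hnat
      _ = 2 ^ m := by push_cast; ring
  -- put it together
  have hsumlb : -((2 : ℝ) ^ m * B ^ 2) ≤ ∑ i ∈ range (2 * n + 1),
      (-1 : ℝ) ^ (i + 1) * M (i + 1) * M (m - (i + 1)) * (m.choose (i + 1)) := by
    calc -((2 : ℝ) ^ m * B ^ 2)
        ≤ -((∑ i ∈ range (2 * n + 1), (m.choose (i + 1) : ℝ)) * B ^ 2) := by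
          have : (0:ℝ) ≤ B ^ 2 := by positivity
          nlinarith
      _ = ∑ i ∈ range (2 * n + 1), -((m.choose (i + 1) : ℝ) * B ^ 2) := by
          rw [Finset.sum_mul, ← Finset.sum_neg_distrib]
      _ ≤ _ := Finset.sum_le_sum hmid
  have key : 2 * M m ≤ (∫ ω, (ξ ω - ξ' ω) ^ m ∂μ) + 2 ^ m * B ^ 2 := by
    rw [hexp, hsum]
    linarith
  simpa [hM, hB, hm] using key
end

section
/- For every m with 1 ≤ m ≤ M and every t ≥ 0 one has h_m(t) ≤ Σ_{j=0}^{m} h_{m−j}(0) (α_m t)^j / j! + 2m (c / α_m) R_1^{2m+1} Σ_{j=1}^{m} (α_m t)^j / (R_1^{2j} j!). -/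
open Finset

private lemma moment_aux (ε R₁ c : ℝ) (hε : 0 < ε) (hR₁ : 0 < R₁) (hc : 0 ≤ c)
    (d : ℕ) (hd : 1 ≤ d) (M : ℕ)
    (h : ℕ → ℝ → ℝ)
    (hcont : ∀ m ≤ M, ContinuousOn (h m) (Set.Ici 0))
    (hnonneg : ∀ m ≤ M, ∀ t ≥ (0:ℝ), 0 ≤ h m t)
    (h0 : ∀ t ≥ (0:ℝ), h 0 t = 1)
    (hrec : ∀ m, 1 ≤ m → m ≤ M → ∀ t ≥ (0:ℝ),
      h m t ≤ h m 0 + 2 * (m : ℝ) * c * t * R₁ ^ (2 * m - 1) +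
        (ε * m * ((d : ℝ) + 2 * m - 2)) * ∫ s in (0:ℝ)..t, h (m - 1) s) :
    ∀ m, m ≤ M → ∀ β : ℝ, 0 < β → ε * m * ((d : ℝ) + 2 * m - 2) ≤ β →
      ∀ t ≥ (0:ℝ),
      h m t ≤
        (∑ j ∈ Finset.range (m + 1), h (m - j) 0 * (β * t) ^ j / (Nat.factorial j)) +
        2 * (m : ℝ) * (c / β) * R₁ ^ (2 * m + 1) *
          ∑ j ∈ Finset.range m,
            (β * t) ^ (j + 1) / (R₁ ^ (2 * (j + 1)) * (Nat.factorial (j + 1))) := by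
  intro m
  induction m with
  | zero =>
      intro _ β hβ _ t ht
      simp [h0 t ht, h0 0 le_rfl]
  | succ n ih =>
      intro hm β hβ hαβ t ht
      have hnM : n ≤ M := le_trans (Nat.le_succ n) hm
      have hd1 : (1:ℝ) ≤ (d:ℝ) := by exact_mod_cast hd
      have hn0 : (0:ℝ) ≤ (n:ℝ) := Nat.cast_nonneg n
      have hβ' : β ≠ 0 := ne_of_gt hβ
      have hR' : R₁ ≠ 0 := ne_of_gt hR₁
      have hαn : ε * n * ((d:ℝ) + 2 * n - 2) ≤ β := by
        refine le_trans ?_ hαβ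
        push_cast
        nlinarith [hε.le]
      set C : ℝ := 2 * (n:ℝ) * (c / β) * R₁ ^ (2 * n + 1) with hCdef
      set a : ℕ → ℝ := fun j => h (n - j) 0 * β ^ j / (Nat.factorial j) with hadef
      set b : ℕ → ℝ :=
        fun j => C * β ^ (j + 1) / (R₁ ^ (2 * (j + 1)) * (Nat.factorial (j + 1))) with hbdef
      set E : ℝ → ℝ := fun s =>
        (∑ j ∈ Finset.range (n + 1), a j * s ^ j) +
          ∑ j ∈ Finset.range n, b j * s ^ (j + 1) with hEdef
      have hEbound : ∀ s ∈ Set.Icc (0:ℝ) t, h n s ≤ E s := by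
        intro s hs
        refine le_trans (ih hnM β hβ hαn s hs.1) (le_of_eq ?_)
        simp only [hEdef, hadef, hbdef, hCdef, Finset.mul_sum]
        congr 1
        · exact Finset.sum_congr rfl fun j _ => by rw [mul_pow]; ring
        · exact Finset.sum_congr rfl fun j _ => by rw [mul_pow]; ring
      have hc1 : Continuous fun s : ℝ => ∑ j ∈ Finset.range (n + 1), a j * s ^ j :=
        continuous_finset_sum _ fun j _ => continuous_const.mul (continuous_pow j)
      have hc2 : Continuous fun s : ℝ => ∑ j ∈ Finset.range n, b j * s ^ (j + 1) :=
        continuous_finset_sum _ fun j _ => continuous_const.mul (continuous_pow (j + 1))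
      have hEcont : Continuous E := by rw [hEdef]; exact hc1.add hc2
      have hint1 : IntervalIntegrable (h n) MeasureTheory.volume 0 t := by
        apply ContinuousOn.intervalIntegrable
        apply (hcont n hnM).mono
        rw [Set.uIcc_of_le ht]
        exact fun x hx => hx.1
      have hint2 : IntervalIntegrable E MeasureTheory.volume 0 t :=
        hEcont.intervalIntegrable 0 t
      have hI0 : 0 ≤ ∫ s in (0:ℝ)..t, h n s :=
        intervalIntegral.integral_nonneg ht fun s hs => hnonneg n hnM s hs.1
      have hIE : (∫ s in (0:ℝ)..t, h n s) ≤ ∫ s in (0:ℝ)..t, E s :=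
        intervalIntegral.integral_mono_on ht hint1 hint2 hEbound
      have hmono : ∀ (k : ℕ) (co : ℝ),
          ∫ s in (0:ℝ)..t, co * s ^ k = co * (t ^ (k + 1) / ((k:ℝ) + 1)) := by
        intro k co
        rw [intervalIntegral.integral_const_mul, integral_pow]
        norm_num
      have hEint : (∫ s in (0:ℝ)..t, E s) =
          (∑ j ∈ Finset.range (n + 1), a j * (t ^ (j + 1) / ((j:ℝ) + 1))) +
            ∑ j ∈ Finset.range n, b j * (t ^ (j + 2) / ((j:ℝ) + 2)) := by
        simp only [hEdef]
        rw [intervalIntegral.integral_add (hc1.intervalIntegrable 0 t)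
              (hc2.intervalIntegrable 0 t),
            intervalIntegral.integral_finset_sum (f := fun j (s : ℝ) => a j * s ^ j) (fun j _ =>
              ((continuous_const.mul (continuous_pow j)).intervalIntegrable 0 t :
                IntervalIntegrable (fun s : ℝ => a j * s ^ j) MeasureTheory.volume 0 t)),
            intervalIntegral.integral_finset_sum (f := fun j (s : ℝ) => b j * s ^ (j + 1)) (fun j _ =>
              ((continuous_const.mul (continuous_pow (j + 1))).intervalIntegrable 0 t :
                IntervalIntegrable (fun s : ℝ => b j * s ^ (j + 1)) MeasureTheory.volume 0 t))]
        congr 1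
        · exact Finset.sum_congr rfl fun j _ => hmono j (a j)
        · refine Finset.sum_congr rfl fun j _ => ?_
          have := hmono (j + 1) (b j)
          rw [this]
          push_cast
          ring_nf
      -- the recursion step
      have hstep := hrec (n + 1) (Nat.succ_le_succ (Nat.zero_le n)) hm t ht
      have hpow : 2 * (n + 1) - 1 = 2 * n + 1 := by omega
      rw [hpow] at hstep
      have hchain : h (n + 1) t ≤
          h (n + 1) 0 + 2 * ((n:ℝ) + 1) * c * t * R₁ ^ (2 * n + 1) +
            β * ((∑ j ∈ Finset.range (n + 1), a j * (t ^ (j + 1) / ((j:ℝ) + 1))) +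
              ∑ j ∈ Finset.range n, b j * (t ^ (j + 2) / ((j:ℝ) + 2))) := by
        refine le_trans hstep ?_
        have h1 : (ε * (↑(n + 1) : ℝ) * ((d : ℝ) + 2 * (↑(n + 1)) - 2)) *
            (∫ s in (0:ℝ)..t, h n s) ≤ β * ∫ s in (0:ℝ)..t, E s := by
          calc (ε * (↑(n + 1) : ℝ) * ((d : ℝ) + 2 * (↑(n + 1)) - 2)) *
              (∫ s in (0:ℝ)..t, h n s) ≤ β * ∫ s in (0:ℝ)..t, h n s :=
                mul_le_mul_of_nonneg_right hαβ hI0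
            _ ≤ β * ∫ s in (0:ℝ)..t, E s := mul_le_mul_of_nonneg_left hIE hβ.le
        rw [hEint] at h1
        push_cast
        push_cast at h1
        simp only [Nat.add_sub_cancel] at hstep ⊢
        linarith
      refine le_trans hchain ?_
      -- first part equality
      have e1 : (∑ j ∈ Finset.range (n + 1 + 1), h (n + 1 - j) 0 * (β * t) ^ j /
            (Nat.factorial j)) =
          h (n + 1) 0 + ∑ j ∈ Finset.range (n + 1), β * (a j * (t ^ (j + 1) / ((j:ℝ) + 1))) := by
        rw [Finset.sum_range_succ']
        rw [add_comm]
        congr 1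
        · simp
        · refine Finset.sum_congr rfl fun j _ => ?_
          simp only [hadef, Nat.succ_sub_succ, Nat.factorial_succ, mul_pow]
          have h1 : ((j:ℝ) + 1) ≠ 0 := by positivity
          have h2 : ((Nat.factorial j : ℝ)) ≠ 0 := by positivity
          push_cast
          field_simp
          ring
      -- second part inequality
      have e2 : 2 * ((n:ℝ) + 1) * c * t * R₁ ^ (2 * n + 1) +
            ∑ j ∈ Finset.range n, β * (b j * (t ^ (j + 2) / ((j:ℝ) + 2))) ≤
          2 * (↑(n + 1) : ℝ) * (c / β) * R₁ ^ (2 * (n + 1) + 1) *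
            ∑ j ∈ Finset.range (n + 1),
              (β * t) ^ (j + 1) / (R₁ ^ (2 * (j + 1)) * (Nat.factorial (j + 1))) := by
        rw [Finset.mul_sum, Finset.sum_range_succ']
        refine le_trans (le_of_eq (add_comm _ _))
          (add_le_add (Finset.sum_le_sum fun j _ => ?_) (le_of_eq ?_))
        case refine_2 =>
          push_cast
          simp only [zero_add, pow_one, Nat.factorial_one, Nat.cast_one, mul_one]
          field_simp
          ring
        · -- termwise: n·K ≤ (n+1)·K
          set K : ℝ := 2 * c * R₁ ^ (2 * n + 1) * β ^ (j + 1) * t ^ (j + 2) /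
            (R₁ ^ (2 * j + 2) * (Nat.factorial (j + 2))) with hKdef
          have hK : 0 ≤ K := by
            apply div_nonneg
            · positivity
            · positivity
          have hfac : ((Nat.factorial (j+2) : ℝ)) ≠ 0 := by positivity
          have hfac1 : ((Nat.factorial (j+1) : ℝ)) ≠ 0 := by positivity
          have hj2 : ((j:ℝ) + 2) ≠ 0 := by positivity
          have hL : β * (b j * (t ^ (j + 2) / ((j:ℝ) + 2))) = (n:ℝ) * K := by
            simp only [hbdef, hCdef, hKdef]
            have : (Nat.factorial (j + 2) : ℝ) = ((j:ℝ) + 2) * (Nat.factorial (j + 1)) := by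
              rw [Nat.factorial_succ]; push_cast; ring
            rw [this]
            field_simp
            ring
          have hR2 : 2 * (↑(n + 1) : ℝ) * (c / β) * R₁ ^ (2 * (n + 1) + 1) *
              ((β * t) ^ (j + 1 + 1) / (R₁ ^ (2 * (j + 1 + 1)) * (Nat.factorial (j + 1 + 1)))) =
              ((n:ℝ) + 1) * K := by
            simp only [hKdef]
            push_cast
            rw [mul_pow]
            field_simp
            ring
          rw [hL, hR2]
          exact mul_le_mul_of_nonneg_right (by linarith) hK
      calc h (n + 1) 0 + 2 * ((n:ℝ) + 1) * c * t * R₁ ^ (2 * n + 1) +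
            β * ((∑ j ∈ Finset.range (n + 1), a j * (t ^ (j + 1) / ((j:ℝ) + 1))) +
              ∑ j ∈ Finset.range n, b j * (t ^ (j + 2) / ((j:ℝ) + 2)))
          = (h (n + 1) 0 + ∑ j ∈ Finset.range (n + 1), β * (a j * (t ^ (j + 1) / ((j:ℝ) + 1)))) +
            (2 * ((n:ℝ) + 1) * c * t * R₁ ^ (2 * n + 1) +
              ∑ j ∈ Finset.range n, β * (b j * (t ^ (j + 2) / ((j:ℝ) + 2)))) := by
            simp only [mul_add, Finset.mul_sum]; ring
        _ ≤ _ := by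
            rw [← e1]
            exact add_le_add (le_refl _) e2

/-- The inductive moment bound (2.19) in the proof of Lemma 2.8: if the functions
`h m` (standing for `E‖Z_t‖^{2m}`) satisfy the recursive integral inequality, then they
satisfy the explicit bound. Here `α m = ε m (d + 2m − 2)` and `c = ‖V(0)‖`. -/
theorem moment_recursion (ε R₁ c : ℝ) (hε : 0 < ε) (hR₁ : 0 < R₁) (hc : 0 ≤ c)
    (d : ℕ) (hd : 1 ≤ d) (M : ℕ) (hM : 1 ≤ M)
    (h : ℕ → ℝ → ℝ)
    (hcont : ∀ m ≤ M, ContinuousOn (h m) (Set.Ici 0))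
    (hnonneg : ∀ m ≤ M, ∀ t ≥ (0:ℝ), 0 ≤ h m t)
    (h0 : ∀ t ≥ (0:ℝ), h 0 t = 1)
    (hrec : ∀ m, 1 ≤ m → m ≤ M → ∀ t ≥ (0:ℝ),
      h m t ≤ h m 0 + 2 * (m : ℝ) * c * t * R₁ ^ (2 * m - 1) +
        (ε * m * ((d : ℝ) + 2 * m - 2)) * ∫ s in (0:ℝ)..t, h (m - 1) s) :
    ∀ m, 1 ≤ m → m ≤ M → ∀ t ≥ (0:ℝ),
      h m t ≤
        (∑ j ∈ Finset.range (m + 1),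
          h (m - j) 0 * (ε * m * ((d : ℝ) + 2 * m - 2) * t) ^ j / (Nat.factorial j)) +
        2 * (m : ℝ) * (c / (ε * m * ((d : ℝ) + 2 * m - 2))) * R₁ ^ (2 * m + 1) *
          ∑ j ∈ Finset.Icc 1 m,
            (ε * m * ((d : ℝ) + 2 * m - 2) * t) ^ j / (R₁ ^ (2 * j) * (Nat.factorial j)) := by
  intro m hm1 hmM t ht
  set β : ℝ := ε * m * ((d : ℝ) + 2 * m - 2) with hβdef
  have hm1' : (1:ℝ) ≤ (m:ℝ) := by exact_mod_cast hm1
  have hd1 : (1:ℝ) ≤ (d:ℝ) := by exact_mod_cast hd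
  have hm0 : (0:ℝ) < (m:ℝ) := lt_of_lt_of_le one_pos hm1'
  have hβ : 0 < β := by
    rw [hβdef]
    exact mul_pos (mul_pos hε hm0) (by linarith)
  have hIcc : (∑ j ∈ Finset.Icc 1 m, (β * t) ^ j / (R₁ ^ (2 * j) * (Nat.factorial j))) =
      ∑ j ∈ Finset.range m, (β * t) ^ (j + 1) /
        (R₁ ^ (2 * (j + 1)) * (Nat.factorial (j + 1))) := by
    rw [← Finset.Ico_add_one_right_eq_Icc, Finset.sum_Ico_eq_sum_range]
    exact Finset.sum_congr rfl fun j _ => by rw [add_comm 1 j]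
  rw [hIcc]
  exact moment_aux ε R₁ c hε hR₁ hc d hd M h hcont hnonneg h0 hrec m hmM β hβ le_rfl t ht
end

section
/- For every δ > 0 there exists ϱ > 0 such that for all x, y in the ball B_ϱ(x_stable) = {z ∈ ℝ^d : ‖z − x_stable‖ < ϱ} one has inf_{t ∈ (0,1]} C^s(x, y, t) < δ; that is, the cost of connecting two points near x_stable within time at most 1 is uniformly small. -/
/-- Lemma 4.4, inequality (4.8): the cost of connecting two points near `x_stable`
within time at most 1 is uniformly small. -/
theorem cost_small_near_equilibrium (d : ℕ) (hd : 1 ≤ d) (s : ℝ) (hs : 0 ≤ s)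
    (xstable : EuclideanSpace ℝ (Fin d))
    (V Φ : EuclideanSpace ℝ (Fin d) → EuclideanSpace ℝ (Fin d))
    (hV : LocallyLipschitz V) (hΦ : LocallyLipschitz Φ)
    (ψ : ℝ → EuclideanSpace ℝ (Fin d)) (hψc : Continuous ψ)
    (hψb : ∃ Cb : ℝ, ∀ t : ℝ, ‖ψ t‖ ≤ Cb)
    (C : EuclideanSpace ℝ (Fin d) → EuclideanSpace ℝ (Fin d) → ℝ → ℝ)
    (hC : ∀ (x y : EuclideanSpace ℝ (Fin d)) (t : ℝ), 0 < t →
      C x y t = sInf { e : ℝ |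
        ∃ f f' : ℝ → EuclideanSpace ℝ (Fin d),
          ContinuousOn f' (Set.Icc 0 t) ∧
          (∀ u ∈ Set.Icc (0:ℝ) t, HasDerivAt f (f' u) u) ∧
          f 0 = x ∧ f t = y ∧
          e = (1/2) * ∫ u in (0:ℝ)..t,
            ‖f' u - V (f u) + Φ (f u - ψ (u + s))‖ ^ 2 }) :
    ∀ δ > (0:ℝ), ∃ ϱ > (0:ℝ), ∀ x y : EuclideanSpace ℝ (Fin d),
      ‖x - xstable‖ < ϱ → ‖y - xstable‖ < ϱ →
      sInf ((fun t => C x y t) '' Set.Ioc (0:ℝ) 1) < δ := by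
  intro δ hδ
  obtain ⟨Cb, hCb⟩ := hψb
  have hVc : Continuous V := hV.continuous
  have hΦc : Continuous Φ := hΦ.continuous
  -- bound on V on closedBall xstable 2
  obtain ⟨M₁, hM₁⟩ := (isCompact_closedBall xstable 2).exists_bound_of_continuousOn
    hVc.continuousOn
  -- bound on Φ on closedBall 0 (‖xstable‖ + 2 + max Cb 0)
  obtain ⟨M₂, hM₂⟩ := (isCompact_closedBall (0 : EuclideanSpace ℝ (Fin d))
    (‖xstable‖ + 2 + max Cb 0)).exists_bound_of_continuousOn hΦc.continuousOn
  set M : ℝ := max M₁ 0 + max M₂ 0 with hM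
  have hM0 : 0 ≤ M := by positivity
  have hM1 : (0:ℝ) < (1 + M)^2 := by positivity
  set t₀ : ℝ := min 1 (δ / (1 + M)^2) with ht₀
  have ht₀pos : 0 < t₀ := lt_min one_pos (div_pos hδ hM1)
  have ht₀le1 : t₀ ≤ 1 := min_le_left _ _
  have ht₀δ : t₀ * (1 + M)^2 ≤ δ := by
    have : t₀ ≤ δ / (1 + M)^2 := min_le_right _ _
    calc t₀ * (1 + M)^2 ≤ (δ / (1 + M)^2) * (1 + M)^2 := by
          exact mul_le_mul_of_nonneg_right this (le_of_lt hM1)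
      _ = δ := div_mul_cancel₀ _ (ne_of_gt hM1)
  refine ⟨t₀ / 2, by positivity, ?_⟩
  intro x y hx hy
  -- the straight-line path
  set c : EuclideanSpace ℝ (Fin d) := t₀⁻¹ • (y - x) with hc
  set f : ℝ → EuclideanSpace ℝ (Fin d) := fun u => x + u • c with hf
  have hyx : ‖y - x‖ ≤ t₀ := by
    calc ‖y - x‖ = ‖(y - xstable) - (x - xstable)‖ := by rw [sub_sub_sub_cancel_right]
      _ ≤ ‖y - xstable‖ + ‖x - xstable‖ := norm_sub_le _ _
      _ ≤ t₀ / 2 + t₀ / 2 := add_le_add hy.le hx.le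
      _ = t₀ := by ring
  have hcnorm : ‖c‖ ≤ 1 := by
    rw [hc, norm_smul, Real.norm_eq_abs, abs_of_pos (inv_pos.mpr ht₀pos)]
    calc t₀⁻¹ * ‖y - x‖ ≤ t₀⁻¹ * t₀ :=
          mul_le_mul_of_nonneg_left hyx (inv_pos.mpr ht₀pos).le
      _ = 1 := inv_mul_cancel₀ (ne_of_gt ht₀pos)
  -- pointwise bound on the integrand
  have hbound : ∀ u ∈ Set.Icc (0:ℝ) t₀,
      ‖c - V (f u) + Φ (f u - ψ (u + s))‖ ^ 2 ≤ (1 + M)^2 := by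
    intro u hu
    have hu0 : 0 ≤ u := hu.1
    have hut : u ≤ t₀ := hu.2
    have hfu : ‖f u - xstable‖ ≤ 2 := by
      have h1 : ‖u • c‖ ≤ 1 := by
        rw [norm_smul, Real.norm_eq_abs, abs_of_nonneg hu0]
        calc u * ‖c‖ ≤ 1 * 1 :=
              mul_le_mul (hut.trans ht₀le1) hcnorm (norm_nonneg _) one_pos.le
          _ = 1 := one_mul 1
      calc ‖f u - xstable‖ = ‖(x - xstable) + u • c‖ := by
            simp only [hf]; congr 1; abel
        _ ≤ ‖x - xstable‖ + ‖u • c‖ := norm_add_le _ _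
        _ ≤ t₀ / 2 + 1 := add_le_add hx.le h1
        _ ≤ 1 / 2 + 1 := by linarith
        _ ≤ 2 := by norm_num
    have hVfu : ‖V (f u)‖ ≤ max M₁ 0 := by
      have : f u ∈ Metric.closedBall xstable 2 := by
        rw [Metric.mem_closedBall, dist_eq_norm]; exact hfu
      exact (hM₁ _ this).trans (le_max_left _ _)
    have hΦfu : ‖Φ (f u - ψ (u + s))‖ ≤ max M₂ 0 := by
      have hmem : f u - ψ (u + s) ∈
          Metric.closedBall (0 : EuclideanSpace ℝ (Fin d)) (‖xstable‖ + 2 + max Cb 0) := by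
        rw [Metric.mem_closedBall, dist_zero_right]
        calc ‖f u - ψ (u + s)‖ ≤ ‖f u‖ + ‖ψ (u + s)‖ := norm_sub_le _ _
          _ ≤ (‖xstable‖ + 2) + max Cb 0 := by
              refine add_le_add ?_ ((hCb _).trans (le_max_left _ _))
              calc ‖f u‖ = ‖xstable + (f u - xstable)‖ := by congr 1; abel
                _ ≤ ‖xstable‖ + ‖f u - xstable‖ := norm_add_le _ _
                _ ≤ ‖xstable‖ + 2 := by linarith
      exact (hM₂ _ hmem).trans (le_max_left _ _)
    have hnorm : ‖c - V (f u) + Φ (f u - ψ (u + s))‖ ≤ 1 + M := by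
      calc ‖c - V (f u) + Φ (f u - ψ (u + s))‖
          ≤ ‖c - V (f u)‖ + ‖Φ (f u - ψ (u + s))‖ := norm_add_le _ _
        _ ≤ (‖c‖ + ‖V (f u)‖) + ‖Φ (f u - ψ (u + s))‖ := by
            have := norm_sub_le c (V (f u)); linarith
        _ ≤ (1 + max M₁ 0) + max M₂ 0 := by
            exact add_le_add (add_le_add hcnorm hVfu) hΦfu
        _ = 1 + M := by rw [hM]; ring
    exact pow_le_pow_left₀ (norm_nonneg _) hnorm 2
  -- the cost element
  have hfcont : Continuous f := by
    apply continuous_const.add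
    exact (continuous_id.smul continuous_const)
  have hgcont : Continuous (fun u => ‖c - V (f u) + Φ (f u - ψ (u + s))‖ ^ 2) := by
    apply Continuous.pow
    apply Continuous.norm
    exact ((continuous_const.sub (hVc.comp hfcont)).add
      (hΦc.comp ((hfcont.sub (hψc.comp (continuous_id.add continuous_const))))))
  have hint : (∫ u in (0:ℝ)..t₀, ‖c - V (f u) + Φ (f u - ψ (u + s))‖ ^ 2)
      ≤ t₀ * (1 + M)^2 := by
    have h1 : (∫ u in (0:ℝ)..t₀, ‖c - V (f u) + Φ (f u - ψ (u + s))‖ ^ 2)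
        ≤ ∫ _u in (0:ℝ)..t₀, (1 + M)^2 := by
      apply intervalIntegral.integral_mono_on ht₀pos.le
        (hgcont.intervalIntegrable _ _) (intervalIntegrable_const)
      exact hbound
    simpa using h1
  set e : ℝ := (1/2) * (∫ u in (0:ℝ)..t₀, ‖c - V (f u) + Φ (f u - ψ (u + s))‖ ^ 2)
    with he
  have heδ : e < δ := by
    have h2 : e ≤ (1/2) * (t₀ * (1 + M)^2) := by
      rw [he]
      exact mul_le_mul_of_nonneg_left hint (by norm_num)
    nlinarith
  -- e is in the set defining C x y t₀
  have hmem : e ∈ { e : ℝ |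
      ∃ f f' : ℝ → EuclideanSpace ℝ (Fin d),
        ContinuousOn f' (Set.Icc 0 t₀) ∧
        (∀ u ∈ Set.Icc (0:ℝ) t₀, HasDerivAt f (f' u) u) ∧
        f 0 = x ∧ f t₀ = y ∧
        e = (1/2) * ∫ u in (0:ℝ)..t₀,
          ‖f' u - V (f u) + Φ (f u - ψ (u + s))‖ ^ 2 } := by
    refine ⟨f, fun _ => c, continuousOn_const, ?_, ?_, ?_, he⟩
    · intro u _
      have h := ((hasDerivAt_id u).smul_const c).const_add x
      simpa [hf, one_smul] using h
    · simp [hf]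
    · rw [hf]
      simp only
      rw [hc, smul_smul, mul_inv_cancel₀ (ne_of_gt ht₀pos), one_smul]
      abel
  have hCt₀ : C x y t₀ < δ := by
    rw [hC x y t₀ ht₀pos]
    by_cases hbdd : BddBelow { e : ℝ |
      ∃ f f' : ℝ → EuclideanSpace ℝ (Fin d),
        ContinuousOn f' (Set.Icc 0 t₀) ∧
        (∀ u ∈ Set.Icc (0:ℝ) t₀, HasDerivAt f (f' u) u) ∧
        f 0 = x ∧ f t₀ = y ∧
        e = (1/2) * ∫ u in (0:ℝ)..t₀,
          ‖f' u - V (f u) + Φ (f u - ψ (u + s))‖ ^ 2 }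
    · exact csInf_lt_of_lt hbdd hmem heδ
    · rw [Real.sInf_of_not_bddBelow hbdd]; exact hδ
  -- conclude for the outer sInf
  have hmem2 : C x y t₀ ∈ (fun t => C x y t) '' Set.Ioc (0:ℝ) 1 :=
    ⟨t₀, ⟨ht₀pos, ht₀le1⟩, rfl⟩
  by_cases hbdd : BddBelow ((fun t => C x y t) '' Set.Ioc (0:ℝ) 1)
  · exact csInf_lt_of_lt hbdd hmem2 hCt₀
  · rw [Real.sInf_of_not_bddBelow hbdd]; exact hδ
end
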